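/- arXiv:2403.11154 — 4 statements merged into one kernel-verified Lean document; each statement's English description precedes it below -/
import Mathlib

section
/- Let F be a field of characteristic p > 0, α ∈ F, β ∈ F^×. The F-algebra A = [α,β)_{p,F} generated by elements i, j with relations i^p - i = α, j^p = β, and j i j^{-1} = i + 1 has dimension p² over F, with F-basis {i^a j^b : 0 ≤ a, b ≤ p-1}. -/
/-- The defining relations of the cyclic `p`-algebra `[α,β)_{p,F}`:
`i^p - i = α`, `j^p = β`, `j i = (i+1) j`, where `i` and `j` are the images of
the free generators indexed by `false` and `true` respectively. -/
inductive CyclicRel (F : Type) [Field F] (p : ℕ) (α β : F) :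
    FreeAlgebra F Bool → FreeAlgebra F Bool → Prop
  | i : CyclicRel F p α β (FreeAlgebra.ι F false ^ p - FreeAlgebra.ι F false)
      (algebraMap F (FreeAlgebra F Bool) α)
  | j : CyclicRel F p α β (FreeAlgebra.ι F true ^ p)
      (algebraMap F (FreeAlgebra F Bool) β)
  | comm : CyclicRel F p α β (FreeAlgebra.ι F true * FreeAlgebra.ι F false)
      ((FreeAlgebra.ι F false + 1) * FreeAlgebra.ι F true)

/-- The cyclic algebra `[α,β)_{p,F}`, presented by generators and relations. -/
abbrev CyclicAlg (F : Type) [Field F] (p : ℕ) (α β : F) : Type :=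
  RingQuot (CyclicRel F p α β)

noncomputable section
set_option linter.unusedSectionVars false
namespace CyclicAux
open Polynomial
open Fin.NatCast

variable (F : Type) [Field F] (p : ℕ) [hp : Fact p.Prime] [CharP F p] (α β : F)

abbrev fpoly : F[X] := X ^ p - X - C α

lemma fpoly_eq : fpoly F p α = X ^ p - (X + C α) := by ring

lemma deg_lin : (X + C α : F[X]).degree < (p : WithBot ℕ) := by
  have h1 : (1 : WithBot ℕ) < (p : WithBot ℕ) := by exact_mod_cast hp.out.one_lt
  refine lt_of_le_of_lt (degree_add_le _ _) (max_lt ?_ (lt_of_le_of_lt degree_C_le ?_))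
  · rw [degree_X]; exact h1
  · exact lt_trans (by exact_mod_cast one_pos) h1

lemma fpoly_monic : (fpoly F p α).Monic := by
  rw [fpoly_eq]; exact monic_X_pow_sub (deg_lin F p α)

lemma fpoly_degree : (fpoly F p α).degree = p := by
  rw [fpoly_eq, degree_sub_eq_left_of_degree_lt, degree_X_pow]
  rw [degree_X_pow]; exact deg_lin F p α

lemma fpoly_natDegree : (fpoly F p α).natDegree = p :=
  natDegree_eq_of_degree_eq_some (fpoly_degree F p α)

abbrev K := AdjoinRoot (fpoly F p α)

instance : Nontrivial (K F p α) := by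
  have b := (AdjoinRoot.powerBasis' (fpoly_monic F p α)).basis
  have hd : (AdjoinRoot.powerBasis' (fpoly_monic F p α)).dim = p := by
    rw [AdjoinRoot.powerBasis'_dim, fpoly_natDegree]
  have i0 : Fin (AdjoinRoot.powerBasis' (fpoly_monic F p α)).dim := ⟨0, by rw [hd]; exact hp.out.pos⟩
  exact nontrivial_of_ne (b i0) 0 (b.ne_zero _)

instance : CharP (K F p α) p :=
  charP_of_injective_algebraMap (algebraMap F (K F p α)).injective p

abbrev rt : K F p α := AdjoinRoot.root _

lemma rt_pow : (rt F p α) ^ p = rt F p α + algebraMap F _ α := by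
  have h : (AdjoinRoot.mk (fpoly F p α)) (X ^ p - X - C α) = 0 := AdjoinRoot.mk_self
  rw [map_sub, map_sub, map_pow, AdjoinRoot.mk_X, AdjoinRoot.mk_C,
    ← AdjoinRoot.algebraMap_eq] at h
  have := sub_eq_zero.mp h
  rw [sub_eq_iff_eq_add] at this
  rw [this]; ring

lemma natCast_pow_char (k : ℕ) : ((k : K F p α)) ^ p = (k : K F p α) := by
  have h : ((k ^ p : ℕ) : K F p α) = ((k : ℕ) : K F p α) := by
    rw [CharP.natCast_eq_natCast (K F p α) p]
    have := ZMod.pow_card (k : ZMod p)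
    rwa [← Nat.cast_pow, ZMod.natCast_eq_natCast_iff] at this
  rw [← Nat.cast_pow]; exact h


abbrev M := Fin p → K F p α

instance : NeZero p := ⟨hp.out.ne_zero⟩

def Iop : Module.End F (M F p α) where
  toFun v := fun k => (rt F p α + ((k : ℕ) : K F p α)) * v k
  map_add' v w := funext fun k => by simp [mul_add]
  map_smul' c v := funext fun k => by simp [mul_smul_comm]

def Jop : Module.End F (M F p α) where
  toFun v := fun k => (if (k : ℕ) = p - 1 then algebraMap F (K F p α) β else 1) * v (k + 1)
  map_add' v w := funext fun k => by simp [mul_add]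
  map_smul' c v := funext fun k => by simp [mul_smul_comm]

lemma Iop_pow (n : ℕ) (v : M F p α) (k : Fin p) :
    ((Iop F p α) ^ n) v k = (rt F p α + ((k : ℕ) : K F p α)) ^ n * v k := by
  induction n with
  | zero => simp
  | succ n ih =>
    rw [pow_succ', Module.End.mul_apply]
    show (rt F p α + ((k : ℕ) : K F p α)) * (((Iop F p α) ^ n) v k) = _
    rw [ih]; ring

lemma val_add_one (k : Fin p) :
    ((k + 1 : Fin p) : ℕ) = if (k : ℕ) = p - 1 then 0 else (k : ℕ) + 1 := by
  have h2 := hp.out.two_le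
  have hk := k.isLt
  rw [Fin.add_def]
  simp only [Fin.val_one', Nat.mod_eq_of_lt (lt_of_lt_of_le one_lt_two h2)]
  split
  · next h =>
      simp only [h]
      have hpp : p - 1 + 1 = p := by omega
      rw [hpp, Nat.mod_self]
  · next h => exact Nat.mod_eq_of_lt (by omega)

lemma Jop_pow (n : ℕ) (hn : n ≤ p) (v : M F p α) (k : Fin p) :
    ((Jop F p α β) ^ n) v k =
      (if p ≤ (k : ℕ) + n then algebraMap F (K F p α) β else 1) * v (k + (n : Fin p)) := by
  induction n generalizing k with
  | zero =>
    have : ¬ p ≤ (k : ℕ) := not_le.mpr k.isLt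
    simp [this]
  | succ n ih =>
    have hn' : n ≤ p := le_of_lt (lt_of_lt_of_le (Nat.lt_succ_self n) hn)
    rw [pow_succ', Module.End.mul_apply]
    show (if (k : ℕ) = p - 1 then algebraMap F (K F p α) β else 1) *
        (((Jop F p α β) ^ n) v (k + 1)) = _
    rw [ih hn' (k+1)]
    have hidx : (k + 1) + (n : Fin p) = k + ((n + 1 : ℕ) : Fin p) := by
      push_cast; abel
    rw [hidx, val_add_one]
    have h2 := hp.out.two_le
    have hk := k.isLt
    by_cases h : (k : ℕ) = p - 1
    · simp only [if_pos h]
      rw [if_neg (by omega : ¬ p ≤ 0 + n), if_pos (by omega : p ≤ (k:ℕ) + (n + 1))]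
      ring
    · simp only [if_neg h]
      have he : (k : ℕ) + 1 + n = (k : ℕ) + (n + 1) := by omega
      rw [he]
      ring


lemma rel_i : (Iop F p α) ^ p - Iop F p α = algebraMap F (Module.End F (M F p α)) α := by
  apply LinearMap.ext; intro v; funext k
  have hchar : CharP (K F p α) p := inferInstance
  have hfrob : (rt F p α + ((k : ℕ) : K F p α)) ^ p
      = rt F p α + ((k : ℕ) : K F p α) + algebraMap F (K F p α) α := by
    rw [add_pow_char, rt_pow, natCast_pow_char]; ring
  rw [LinearMap.sub_apply]
  show ((Iop F p α) ^ p) v k - (rt F p α + ((k : ℕ) : K F p α)) * v k = _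
  rw [Iop_pow, hfrob]
  rw [Module.algebraMap_end_apply]
  show _ = α • v k
  rw [Algebra.smul_def]
  ring

lemma rel_j : (Jop F p α β) ^ p = algebraMap F (Module.End F (M F p α)) β := by
  apply LinearMap.ext; intro v; funext k
  rw [Jop_pow F p α β p le_rfl, Module.algebraMap_end_apply]
  rw [if_pos (Nat.le_add_left p k), Fin.natCast_self, add_zero]
  show _ = (β • v) k
  rw [Pi.smul_apply, Algebra.smul_def]

lemma rel_comm : Jop F p α β * Iop F p α = (Iop F p α + 1) * Jop F p α β := by
  apply LinearMap.ext; intro v; funext k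
  rw [Module.End.mul_apply, Module.End.mul_apply]
  show (if (k : ℕ) = p - 1 then algebraMap F (K F p α) β else 1) * ((Iop F p α) v (k + 1)) = _
  show _ = ((Iop F p α + 1) ((Jop F p α β) v)) k
  rw [LinearMap.add_apply]
  show _ = (rt F p α + ((k : ℕ) : K F p α)) * ((Jop F p α β) v k) + ((Jop F p α β) v) k
  show (if (k : ℕ) = p - 1 then algebraMap F (K F p α) β else 1) *
      ((rt F p α + (((k + 1 : Fin p) : ℕ) : K F p α)) * v (k + 1)) =
    (rt F p α + ((k : ℕ) : K F p α)) *
        ((if (k : ℕ) = p - 1 then algebraMap F (K F p α) β else 1) * v (k + 1)) +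
      (if (k : ℕ) = p - 1 then algebraMap F (K F p α) β else 1) * v (k + 1)
  rw [val_add_one]
  by_cases h : (k : ℕ) = p - 1
  · simp only [if_pos h]
    rw [h, Nat.cast_zero]
    have h1 : (((p - 1 : ℕ) : K F p α) + 1) = ((p : ℕ) : K F p α) := by
      rw [← Nat.cast_add_one, Nat.sub_add_cancel hp.out.one_le]
    have h2 : ((p : ℕ) : K F p α) = 0 := CharP.cast_eq_zero _ p
    have h3 : (((p - 1 : ℕ) : K F p α) + 1) = 0 := by rw [h1, h2]
    linear_combination (-(algebraMap F (K F p α) β * v (k + 1))) * h3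
  · simp only [if_neg h]
    push_cast
    ring


def phi : FreeAlgebra F Bool →ₐ[F] Module.End F (M F p α) :=
  FreeAlgebra.lift F (fun b => if b then Jop F p α β else Iop F p α)

lemma phi_rel : ∀ ⦃x y⦄, CyclicRel F p α β x y → phi F p α β x = phi F p α β y := by
  intro x y h
  cases h with
  | i => simp only [phi, map_sub, map_pow, FreeAlgebra.lift_ι_apply, if_neg Bool.false_ne_true,
      AlgHom.commutes]; exact rel_i F p α
  | j => simp only [phi, map_pow, FreeAlgebra.lift_ι_apply, if_pos rfl,
      AlgHom.commutes]; exact rel_j F p α β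
  | comm => simp only [phi, map_mul, map_add, map_one, FreeAlgebra.lift_ι_apply,
      if_pos rfl, if_neg Bool.false_ne_true]; exact rel_comm F p α β

def psi : CyclicAlg F p α β →ₐ[F] Module.End F (M F p α) :=
  RingQuot.liftAlgHom F ⟨phi F p α β, phi_rel F p α β⟩

lemma psi_mk (a b : ℕ) :
    psi F p α β (RingQuot.mkAlgHom F (CyclicRel F p α β)
      (FreeAlgebra.ι F false ^ a * FreeAlgebra.ι F true ^ b))
      = (Iop F p α) ^ a * (Jop F p α β) ^ b := by
  rw [psi, RingQuot.liftAlgHom_mkAlgHom_apply, map_mul, map_pow, map_pow]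
  simp [phi, FreeAlgebra.lift_ι_apply]

def e0 : M F p α := Pi.single 0 1

def cf (b : Fin p) : K F p α := if (b : ℕ) = 0 then 1 else algebraMap F (K F p α) β

lemma cf_isUnit (hβ : β ≠ 0) (b : Fin p) : IsUnit (cf F p α β b) := by
  unfold cf; split
  · exact isUnit_one
  · exact (hβ.isUnit).map (algebraMap F (K F p α))

lemma neg_val (b : Fin p) (hb : b ≠ 0) : (((-b : Fin p)) : ℕ) = p - (b : ℕ) := by
  have hbv : (b : ℕ) ≠ 0 := fun h => hb (Fin.ext h)
  have hlt := b.isLt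
  have key : (⟨p - (b : ℕ), by omega⟩ : Fin p) + b = 0 := by
    apply Fin.ext
    rw [Fin.add_def]
    simp only [Fin.val_zero]
    have : p - (b : ℕ) + (b : ℕ) = p := by omega
    rw [this, Nat.mod_self]
  have := neg_eq_of_add_eq_zero_left key
  rw [this]

lemma tfam (a b : Fin p) :
    ((Iop F p α) ^ (a : ℕ) * (Jop F p α β) ^ (b : ℕ)) (e0 F p α) =
      Pi.single (-b) (cf F p α β b *
        (rt F p α + ((((-b : Fin p)) : ℕ) : K F p α)) ^ (a : ℕ)) := by
  funext k
  rw [Module.End.mul_apply, Iop_pow, Jop_pow F p α β (b : ℕ) b.isLt.le,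
    Fin.cast_val_eq_self]
  simp only [e0]
  rw [Pi.single_apply, Pi.single_apply]
  by_cases hk : k = -b
  · have hz : k + b = 0 := by rw [hk]; abel
    rw [if_pos hk, if_pos hz, hk]
    have hco : (if p ≤ (((-b : Fin p)) : ℕ) + (b : ℕ) then algebraMap F (K F p α) β else 1)
        = cf F p α β b := by
      by_cases hb : b = 0
      · subst hb
        simp only [neg_zero, Fin.val_zero, add_zero, Nat.le_zero, cf, if_pos rfl, if_true]
        rw [if_neg hp.out.ne_zero]
      · have hbv : (b : ℕ) ≠ 0 := fun h => hb (Fin.ext h)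
        rw [neg_val p b hb, cf, if_neg hbv,
          if_pos (by have := b.isLt; omega)]
    rw [hco]
    ring
  · have hz : ¬ (k + b = 0) := fun h => hk (eq_neg_of_add_eq_zero_left h)
    rw [if_neg hk, if_neg hz, mul_zero, mul_zero]


lemma kindep (m : ℕ) (c : K F p α) (hc : IsUnit c) :
    LinearIndependent F (fun a : Fin p => c * (rt F p α + ((m : ℕ) : K F p α)) ^ (a : ℕ)) := by
  rw [Fintype.linearIndependent_iff]
  intro g hg a0
  set x : K F p α := rt F p α + ((m : ℕ) : K F p α) with hx
  have h1 : ∑ a : Fin p, g a • x ^ (a : ℕ) = 0 := by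
    have : c * ∑ a : Fin p, g a • x ^ (a : ℕ) = 0 := by
      rw [Finset.mul_sum]
      rw [← hg]
      congr 1; funext a; rw [mul_smul_comm]
    rcases hc with ⟨u, rfl⟩
    have := congrArg (fun z => (↑u⁻¹ : K F p α) * z) this
    simpa [← mul_assoc] using this
  set m' : F := ((m : ℕ) : F) with hm'
  set q : F[X] := ∑ a : Fin p, C (g a) * (X + C m') ^ (a : ℕ) with hq
  have haev : (Polynomial.aeval (rt F p α)) q = 0 := by
    rw [hq, map_sum, ← h1]
    refine Finset.sum_congr rfl fun a _ => ?_
    simp only [map_mul, map_pow, map_add, aeval_C, aeval_X, hm', map_natCast,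
      Algebra.smul_def, hx]
  have hdvd : fpoly F p α ∣ q := by
    rw [← AdjoinRoot.mk_eq_zero, ← AdjoinRoot.aeval_eq]
    exact haev
  have hdeg : q.degree < (fpoly F p α).degree := by
    rw [fpoly_degree, hq]
    refine lt_of_le_of_lt (degree_sum_le _ _) ?_
    rw [Finset.sup_lt_iff (by exact_mod_cast WithBot.bot_lt_coe p)]
    intro a _
    refine lt_of_le_of_lt (degree_mul_le _ _) ?_
    have hC : (C (g a)).degree ≤ 0 := degree_C_le
    have hPow : ((X + C m') ^ (a : ℕ)).degree ≤ ((a : ℕ) : WithBot ℕ) := by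
      refine le_trans (degree_pow_le _ _) ?_
      rw [degree_X_add_C]
      · simp
    calc (C (g a)).degree + ((X + C m') ^ (a : ℕ)).degree
        ≤ 0 + ((a : ℕ) : WithBot ℕ) := add_le_add hC hPow
      _ = ((a : ℕ) : WithBot ℕ) := by rw [zero_add]
      _ < (p : WithBot ℕ) := by exact_mod_cast a.isLt
  have hq0 : q = 0 := eq_zero_of_dvd_of_degree_lt hdvd hdeg
  have hcomp : (Polynomial.aeval (X - C m' : F[X])) q = 0 := by rw [hq0, map_zero]
  rw [hq, map_sum] at hcomp
  have hterm : ∀ a : Fin p, (Polynomial.aeval (X - C m' : F[X])) (C (g a) * (X + C m') ^ (a : ℕ))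
      = C (g a) * X ^ (a : ℕ) := by
    intro a
    simp only [map_mul, map_pow, map_add, aeval_C, aeval_X, Polynomial.algebraMap_eq]
    rw [sub_add_cancel]
  rw [Finset.sum_congr rfl (fun a _ => hterm a)] at hcomp
  have := congrArg (fun r => Polynomial.coeff r (a0 : ℕ)) hcomp
  simp only [Polynomial.finset_sum_coeff, Polynomial.coeff_C_mul, Polynomial.coeff_X_pow,
    Polynomial.coeff_zero] at this
  have h2 : ∑ a : Fin p, (if a = a0 then g a else 0) = 0 := by
    refine Eq.trans (Finset.sum_congr rfl fun a _ => ?_) this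
    by_cases h : a = a0
    · subst h; simp
    · rw [if_neg h, if_neg (fun hh => h (Fin.ext hh.symm)), mul_zero]
  rwa [Finset.sum_ite_eq' Finset.univ a0 g, if_pos (Finset.mem_univ a0)] at h2


lemma li_t (hβ : β ≠ 0) : LinearIndependent F (fun x : Fin p × Fin p =>
    (Pi.single (-x.2) (cf F p α β x.2 *
      (rt F p α + ((((-x.2 : Fin p)) : ℕ) : K F p α)) ^ (x.1 : ℕ)) : M F p α)) := by
  rw [Fintype.linearIndependent_iff]
  intro g hg x
  obtain ⟨a0, b0⟩ := x
  have hb := congrFun hg (-b0)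
  simp only [Finset.sum_apply, Pi.smul_apply, Pi.single_apply, Pi.zero_apply] at hb
  have hb2 : ∑ a : Fin p, g (a, b0) • (cf F p α β b0 *
      (rt F p α + ((((-b0 : Fin p)) : ℕ) : K F p α)) ^ (a : ℕ)) = 0 := by
    refine Eq.trans (Finset.sum_congr rfl fun a _ => ?_)
      (Eq.trans (Fintype.sum_prod_type _).symm hb)
    symm
    have step : ∀ b : Fin p, (g (a, b) • if (-b0 : Fin p) = -b then (cf F p α β b *
        (rt F p α + ((((-b : Fin p)) : ℕ) : K F p α)) ^ (a : ℕ)) else 0)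
        = (if b = b0 then g (a, b0) • (cf F p α β b0 *
          (rt F p α + ((((-b0 : Fin p)) : ℕ) : K F p α)) ^ (a : ℕ)) else 0) := by
      intro b
      by_cases h : b = b0
      · subst h; rw [if_pos rfl, if_pos rfl]
      · rw [if_neg (fun hh => h (neg_inj.mp hh.symm)), if_neg h, smul_zero]
    rw [Finset.sum_congr rfl (fun b _ => step b),
      Finset.sum_ite_eq' Finset.univ b0 _, if_pos (Finset.mem_univ b0)]
  exact (Fintype.linearIndependent_iff.mp
    (kindep F p α (((-b0 : Fin p)) : ℕ) (cf F p α β b0) (cf_isUnit F p α β hβ b0)))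
    (fun a => g (a, b0)) hb2 a0

def Lmap : CyclicAlg F p α β →ₗ[F] M F p α where
  toFun z := psi F p α β z (e0 F p α)
  map_add' x y := by
    show psi F p α β (x + y) (e0 F p α) = psi F p α β x (e0 F p α) + psi F p α β y (e0 F p α)
    rw [map_add, LinearMap.add_apply]
  map_smul' c x := by
    show psi F p α β (c • x) (e0 F p α) = c • psi F p α β x (e0 F p α)
    rw [map_smul, LinearMap.smul_apply]

def vfam (x : Fin p × Fin p) : CyclicAlg F p α β :=
  RingQuot.mkAlgHom F (CyclicRel F p α β)
    (FreeAlgebra.ι F false ^ (x.1 : ℕ) * FreeAlgebra.ι F true ^ (x.2 : ℕ))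

lemma li_v (hβ : β ≠ 0) : LinearIndependent F (vfam F p α β) := by
  apply LinearIndependent.of_comp (Lmap F p α β)
  have he : (⇑(Lmap F p α β)) ∘ (vfam F p α β) = fun x : Fin p × Fin p =>
      (Pi.single (-x.2) (cf F p α β x.2 *
        (rt F p α + ((((-x.2 : Fin p)) : ℕ) : K F p α)) ^ (x.1 : ℕ)) : M F p α) := by
    funext x
    show psi F p α β (vfam F p α β x) (e0 F p α) = _
    rw [vfam, psi_mk, tfam]
  rw [he]
  exact li_t F p α β hβ


abbrev S : Submodule F (CyclicAlg F p α β) := Submodule.span F (Set.range (vfam F p α β))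

def u (n m : ℕ) : CyclicAlg F p α β :=
  RingQuot.mkAlgHom F (CyclicRel F p α β)
    (FreeAlgebra.ι F false ^ n * FreeAlgebra.ι F true ^ m)

lemma u_mem_base (n m : ℕ) (hn : n < p) (hm : m < p) : u F p α β n m ∈ S F p α β :=
  Submodule.subset_span ⟨(⟨n, hn⟩, ⟨m, hm⟩), rfl⟩

lemma mk_i_pow_p : (RingQuot.mkAlgHom F (CyclicRel F p α β) (FreeAlgebra.ι F false)) ^ p
    = RingQuot.mkAlgHom F (CyclicRel F p α β) (FreeAlgebra.ι F false)
      + algebraMap F (CyclicAlg F p α β) α := by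
  have h := RingQuot.mkAlgHom_rel F (CyclicRel.i (F := F) (p := p) (α := α) (β := β))
  rw [map_sub, map_pow, AlgHom.commutes, sub_eq_iff_eq_add] at h
  rw [h]; exact add_comm _ _

lemma mk_j_pow_p : (RingQuot.mkAlgHom F (CyclicRel F p α β) (FreeAlgebra.ι F true)) ^ p
    = algebraMap F (CyclicAlg F p α β) β := by
  have h := RingQuot.mkAlgHom_rel F (CyclicRel.j (F := F) (p := p) (α := α) (β := β))
  rwa [map_pow, AlgHom.commutes] at h

lemma u_add_p (n m : ℕ) : u F p α β (n + p) m
    = u F p α β (n + 1) m + α • u F p α β n m := by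
  unfold u
  simp only [map_mul, map_pow]
  rw [pow_add, mk_i_pow_p, Algebra.smul_def, mul_add, add_mul, pow_succ]
  congr 1
  rw [← Algebra.commutes α ((RingQuot.mkAlgHom F (CyclicRel F p α β)
    (FreeAlgebra.ι F false)) ^ n), mul_assoc]

lemma u_madd_p (n m : ℕ) : u F p α β n (m + p) = β • u F p α β n m := by
  unfold u
  simp only [map_mul, map_pow]
  rw [pow_add, mk_j_pow_p, Algebra.smul_def, ← mul_assoc, ← Algebra.commutes β]

lemma u_mem_left (n : ℕ) : ∀ m < p, u F p α β n m ∈ S F p α β := by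
  induction n using Nat.strong_induction_on with
  | _ n ih =>
    intro m hm
    by_cases hn : n < p
    · exact u_mem_base F p α β n m hn hm
    · push_neg at hn
      have h2 := hp.out.two_le
      have hrw : n = (n - p) + p := by omega
      rw [hrw, u_add_p]
      exact (S F p α β).add_mem (ih (n - p + 1) (by omega) m hm)
        ((S F p α β).smul_mem α (ih (n - p) (by omega) m hm))

lemma u_mem (n m : ℕ) : u F p α β n m ∈ S F p α β := by
  induction m using Nat.strong_induction_on with
  | _ m ih =>
    by_cases hm : m < p
    · exact u_mem_left F p α β n m hm
    · push_neg at hm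
      have h2 := hp.out.two_le
      have hrw : m = (m - p) + p := by omega
      rw [hrw, u_madd_p]
      exact (S F p α β).smul_mem β (ih (m - p) (by omega))

lemma mk_ji (n : ℕ) :
    RingQuot.mkAlgHom F (CyclicRel F p α β) (FreeAlgebra.ι F true * FreeAlgebra.ι F false ^ n)
    = RingQuot.mkAlgHom F (CyclicRel F p α β)
        ((FreeAlgebra.ι F false + 1) ^ n * FreeAlgebra.ι F true) := by
  induction n with
  | zero => simp
  | succ n ih =>
    have hcomm := RingQuot.mkAlgHom_rel F (CyclicRel.comm (F := F) (p := p) (α := α) (β := β))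
    calc RingQuot.mkAlgHom F (CyclicRel F p α β)
          (FreeAlgebra.ι F true * FreeAlgebra.ι F false ^ (n + 1))
        = RingQuot.mkAlgHom F (CyclicRel F p α β)
            (FreeAlgebra.ι F true * FreeAlgebra.ι F false ^ n)
          * RingQuot.mkAlgHom F (CyclicRel F p α β) (FreeAlgebra.ι F false) := by
          rw [← map_mul]; congr 1; rw [pow_succ, ← mul_assoc]
      _ = RingQuot.mkAlgHom F (CyclicRel F p α β) ((FreeAlgebra.ι F false + 1) ^ n)
          * RingQuot.mkAlgHom F (CyclicRel F p α β)
            (FreeAlgebra.ι F true * FreeAlgebra.ι F false) := by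
          rw [ih, map_mul, mul_assoc, ← map_mul]
      _ = RingQuot.mkAlgHom F (CyclicRel F p α β) ((FreeAlgebra.ι F false + 1) ^ n)
          * RingQuot.mkAlgHom F (CyclicRel F p α β)
            ((FreeAlgebra.ι F false + 1) * FreeAlgebra.ι F true) := by rw [hcomm]
      _ = RingQuot.mkAlgHom F (CyclicRel F p α β)
            ((FreeAlgebra.ι F false + 1) ^ (n + 1) * FreeAlgebra.ι F true) := by
          rw [← map_mul, ← mul_assoc, ← pow_succ]

lemma mulJ_u (a b : ℕ) :
    RingQuot.mkAlgHom F (CyclicRel F p α β) (FreeAlgebra.ι F true) * u F p α β a b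
      ∈ S F p α β := by
  set Mi := RingQuot.mkAlgHom F (CyclicRel F p α β) (FreeAlgebra.ι F false) with hMi
  set Mj := RingQuot.mkAlgHom F (CyclicRel F p α β) (FreeAlgebra.ι F true) with hMj
  have hj : Mj * Mi ^ a = (Mi + 1) ^ a * Mj := by
    simpa only [map_mul, map_pow, map_add, map_one] using mk_ji F p α β a
  have hu : ∀ t m : ℕ, u F p α β t m = Mi ^ t * Mj ^ m := by
    intro t m; unfold u; rw [map_mul, map_pow, map_pow]
  have key : Mj * u F p α β a b = (Mi + 1) ^ a * Mj ^ (b + 1) := by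
    rw [hu, ← mul_assoc, hj, mul_assoc, ← pow_succ']
  rw [key, Commute.add_pow (Commute.one_right Mi) a, Finset.sum_mul]
  refine Submodule.sum_mem _ fun t _ => ?_
  have hterm : Mi ^ t * 1 ^ (a - t) * ((a.choose t : ℕ) : CyclicAlg F p α β) * Mj ^ (b + 1)
      = ((a.choose t : ℕ) : F) • u F p α β t (b + 1) := by
    rw [hu, one_pow, mul_one, ← (Nat.cast_commute (a.choose t) (Mi ^ t)).eq, mul_assoc,
      ← nsmul_eq_mul, Nat.cast_smul_eq_nsmul F]
  rw [hterm]
  exact Submodule.smul_mem _ _ (u_mem F p α β t (b + 1))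


lemma mulI_u (a b : ℕ) :
    RingQuot.mkAlgHom F (CyclicRel F p α β) (FreeAlgebra.ι F false) * u F p α β a b
      ∈ S F p α β := by
  have : RingQuot.mkAlgHom F (CyclicRel F p α β) (FreeAlgebra.ι F false) * u F p α β a b
      = u F p α β (a + 1) b := by
    unfold u
    simp only [map_mul, map_pow]
    rw [← mul_assoc, ← pow_succ']
  rw [this]
  exact u_mem F p α β (a + 1) b

lemma gen_mul_mem (bb : Bool) {s : CyclicAlg F p α β} (hs : s ∈ S F p α β) :
    RingQuot.mkAlgHom F (CyclicRel F p α β) (FreeAlgebra.ι F bb) * s ∈ S F p α β := by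
  induction hs using Submodule.span_induction with
  | mem x hx =>
    obtain ⟨⟨a, b⟩, rfl⟩ := hx
    have hx : vfam F p α β (a, b) = u F p α β (a : ℕ) (b : ℕ) := rfl
    rw [hx]
    cases bb
    · exact mulI_u F p α β _ _
    · exact mulJ_u F p α β _ _
  | zero => rw [mul_zero]; exact Submodule.zero_mem _
  | add x y hx hy ihx ihy => rw [mul_add]; exact Submodule.add_mem _ ihx ihy
  | smul c x hx ih => rw [Algebra.mul_smul_comm]; exact Submodule.smul_mem _ _ ih

def T : Subalgebra F (CyclicAlg F p α β) where
  carrier := {z | ∀ s ∈ S F p α β, z * s ∈ S F p α β}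
  mul_mem' := by
    intro x y hx hy s hs
    rw [mul_assoc]
    exact hx _ (hy s hs)
  one_mem' := by intro s hs; rw [one_mul]; exact hs
  add_mem' := by
    intro x y hx hy s hs
    rw [add_mul]
    exact Submodule.add_mem _ (hx s hs) (hy s hs)
  zero_mem' := by intro s hs; rw [zero_mul]; exact Submodule.zero_mem _
  algebraMap_mem' := by
    intro r s hs
    rw [← Algebra.smul_def]
    exact Submodule.smul_mem _ _ hs

lemma T_top : T F p α β = ⊤ := by
  have h1 : Algebra.adjoin F
      (Set.range (⇑(RingQuot.mkAlgHom F (CyclicRel F p α β)) ∘ FreeAlgebra.ι F))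
      = ⊤ := by
    have h2 := AlgHom.map_adjoin (RingQuot.mkAlgHom F (CyclicRel F p α β))
      (Set.range (FreeAlgebra.ι F))
    rw [FreeAlgebra.adjoin_range_ι, Algebra.map_top, ← Set.range_comp] at h2
    rw [← h2]
    exact (AlgHom.range_eq_top _).mpr (RingQuot.mkAlgHom_surjective F _)
  rw [eq_top_iff, ← h1]
  apply Algebra.adjoin_le
  rintro _ ⟨bb, rfl⟩
  intro s hs
  exact gen_mul_mem F p α β bb hs

lemma one_mem_S : (1 : CyclicAlg F p α β) ∈ S F p α β := by
  have : vfam F p α β (0, 0) = 1 := by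
    unfold vfam
    simp
  rw [← this]
  exact Submodule.subset_span ⟨(0, 0), rfl⟩

lemma S_top : S F p α β = ⊤ := by
  rw [eq_top_iff]
  intro z _
  have hz : z ∈ T F p α β := by rw [T_top]; trivial
  have := hz 1 (one_mem_S F p α β)
  rwa [mul_one] at this

end CyclicAux

end

theorem cyclicAlg_dim_and_basis (F : Type) [Field F] (p : ℕ) [Fact p.Prime]
    [CharP F p] (α β : F) (hβ : β ≠ 0) :
    Module.finrank F (CyclicAlg F p α β) = p ^ 2 ∧
    ∃ b : Module.Basis (Fin p × Fin p) F (CyclicAlg F p α β),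
      ∀ a c : Fin p, b (a, c) =
        RingQuot.mkAlgHom F (CyclicRel F p α β)
          (FreeAlgebra.ι F false ^ (a : ℕ) * FreeAlgebra.ι F true ^ (c : ℕ)) := by
  have li := CyclicAux.li_v F p α β hβ
  have hsp : ⊤ ≤ Submodule.span F (Set.range (CyclicAux.vfam F p α β)) :=
    (CyclicAux.S_top F p α β).ge
  let bas : Module.Basis (Fin p × Fin p) F (CyclicAlg F p α β) := Module.Basis.mk li hsp
  constructor
  · rw [Module.finrank_eq_card_basis bas]
    simp [sq]
  · exact ⟨bas, fun a c => by rw [Module.Basis.mk_apply]; rfl⟩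
end

section
/- Let F be a field of characteristic 2 and α, β ∈ F with β ≠ 0. The quaternion algebra [α,β)_{2,F}, generated by i, j with i² + i = α, j² = β, j i j^{-1} = i + 1, is split (isomorphic to the 2×2 matrix algebra over F) if and only if α is of the form x² + x for some x in the field F(√β) — equivalently, if and only if α lies in the image of the Artin–Schreier map composed with the norm condition, i.e., α = y² + y + β z² for some y, z ∈ F. -/
namespace QuatCharTwoAux

lemma two_zero (F : Type) [Field F] [CharP F 2] : (2 : F) = 0 := by
  have := CharP.cast_eq_zero F 2; simpa using this

/-! ### Forward direction: matrices satisfying the relations give the representation -/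

lemma fwd_matrix (F : Type) [Field F] [CharP F 2] (α β : F) (hβ : β ≠ 0)
    (I J : Matrix (Fin 2) (Fin 2) F)
    (hI : I * I - I = algebraMap F _ α)
    (hJ : J * J = algebraMap F _ β)
    (hC : J * I = (I + 1) * J) :
    ∃ y z : F, α = y ^ 2 + y + β * z ^ 2 := by
  have h2 : (2 : F) = 0 := two_zero F
  set a := I 0 0 with ha; set b := I 0 1 with hb; set c := I 1 0 with hc; set d := I 1 1 with hd
  set e := J 0 0 with he; set f := J 0 1 with hf; set g := J 1 0 with hg; set k := J 1 1 with hk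
  have EI := fun p q => Matrix.ext_iff.mpr hI p q
  have EJ := fun p q => Matrix.ext_iff.mpr hJ p q
  have EC := fun p q => Matrix.ext_iff.mpr hC p q
  simp only [Matrix.sub_apply, Matrix.mul_apply, Matrix.add_apply, Matrix.one_apply,
    Matrix.algebraMap_matrix_apply, Fin.sum_univ_two, Algebra.algebraMap_self_apply] at EI EJ EC
  have e00I := EI 0 0; have e01I := EI 0 1; have e10I := EI 1 0
  have e00J := EJ 0 0
  have e00C := EC 0 0; have e01C := EC 0 1; have e10C := EC 1 0; have e11C := EC 1 1
  simp only [← ha, ← hb, ← hc, ← hd, ← he, ← hf, ← hg, ← hk, if_pos rfl] at *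
  norm_num at e00I e01I e10I e00J e00C e01C e10C e11C
  have hek : e = k := by linear_combination e00C - e11C + (b*g + c*f + e - k - 2*c*f) * h2
  have hey : e = f*c + b*g := by linear_combination e00C + (b*g + e - b*g - f*c)*h2
  by_cases hf0 : f = 0
  · by_cases hg0 : g = 0
    · exfalso
      apply hβ
      rw [← e00J, hey, hf0, hg0]; ring
    · -- use z = c / g
      have key : α * g^2 = (a*g+e*c)^2 + (a*g+e*c)*g + β*c^2 := by
        have hda : d = a + 1 := by
          have h1 : g * a + k * c = c * e + d * g + g := by linear_combination e10C
          rw [← hek] at h1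
          have hga : g * (a + d + 1) = 0 := by
            linear_combination h1 + (e*c)*h2 + g*d*h2 + g*h2 - (c*e)*h2
          rcases mul_eq_zero.mp hga with h | h
          · exact absurd h hg0
          · linear_combination h - 2*a*h2 - h2 + a*h2
        have hα : α = a^2 + a + b * c := by linear_combination -e00I - 2*a*h2 + a*h2
        linear_combination g^2*hα + c^2*e00J + c*g*hey + (-(g*a*c*e) - g*c*e + g^2*b*c - c^2*e^2)*h2
      refine ⟨(a*g+e*c)/g, c/g, ?_⟩
      have hg2 : g^2 ≠ (0:F) := pow_ne_zero _ hg0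
      have hdiv : α = ((a*g+e*c)^2 + (a*g+e*c)*g + β*c^2)/g^2 := by
        rw [eq_div_iff hg2]; linear_combination key
      rw [hdiv]; field_simp
  · -- use z = b / f
    have key : α * f^2 = (a*f+e*b)^2 + (a*f+e*b)*f + β*b^2 := by
      have hda : d = a + 1 := by
        have h1 : e * b + f * d = a * f + f + b * k := by linear_combination e01C
        rw [← hek] at h1
        have hfa : f * (a + d + 1) = 0 := by
          linear_combination h1 + (e*b)*h2 + f*a*h2 + f*h2 - (b*e)*h2
        rcases mul_eq_zero.mp hfa with h | h
        · exact absurd h hf0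
        · linear_combination h - 2*a*h2 - h2 + a*h2
      have hα : α = a^2 + a + b * c := by linear_combination -e00I - 2*a*h2 + a*h2
      linear_combination f^2*hα + b^2*e00J + b*f*hey + (-(f*a*b*e) - f*b*e + f^2*b*c - b^2*e^2)*h2
    refine ⟨(a*f+e*b)/f, b/f, ?_⟩
    have hf2 : f^2 ≠ (0:F) := pow_ne_zero _ hf0
    have hdiv : α = ((a*f+e*b)^2 + (a*f+e*b)*f + β*b^2)/f^2 := by
      rw [eq_div_iff hf2]; linear_combination key
    rw [hdiv]; field_simp

/-! ### Generators and relations in the cyclic algebra -/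

section spanning
variable (F : Type) [Field F] (α β : F)

noncomputable def geni : CyclicAlg F 2 α β :=
  RingQuot.mkAlgHom F (CyclicRel F 2 α β) (FreeAlgebra.ι F false)
noncomputable def genj : CyclicAlg F 2 α β :=
  RingQuot.mkAlgHom F (CyclicRel F 2 α β) (FreeAlgebra.ι F true)

lemma rel_ii : geni F α β * geni F α β = α • 1 + geni F α β := by
  have h := RingQuot.mkAlgHom_rel F (CyclicRel.i (F := F) (p := 2) (α := α) (β := β))
  simp only [map_sub, map_pow, AlgHom.commutes] at h
  rw [Algebra.algebraMap_eq_smul_one] at h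
  rw [← h, pow_two, geni]
  abel

lemma rel_jj : genj F α β * genj F α β = β • 1 := by
  have h := RingQuot.mkAlgHom_rel F (CyclicRel.j (F := F) (p := 2) (α := α) (β := β))
  simp only [map_pow, AlgHom.commutes] at h
  rw [Algebra.algebraMap_eq_smul_one] at h
  rw [← h, pow_two, genj]

lemma rel_ji : genj F α β * geni F α β = geni F α β * genj F α β + genj F α β := by
  have h := RingQuot.mkAlgHom_rel F (CyclicRel.comm (F := F) (p := 2) (α := α) (β := β))
  simp only [map_mul, map_add, map_one] at h
  rw [genj, geni, h, add_one_mul]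

lemma span_top :
    Submodule.span F ({1, geni F α β, genj F α β, geni F α β * genj F α β} :
      Set (CyclicAlg F 2 α β)) = ⊤ := by
  set ii := geni F α β
  set jj := genj F α β
  set S := Submodule.span F ({1, ii, jj, ii * jj} : Set (CyclicAlg F 2 α β)) with hS
  have hm1 : (1 : CyclicAlg F 2 α β) ∈ S := Submodule.subset_span (by simp)
  have hmi : ii ∈ S := Submodule.subset_span (by simp)
  have hmj : jj ∈ S := Submodule.subset_span (by simp)
  have hmij : ii * jj ∈ S := Submodule.subset_span (by simp)
  have hii := rel_ii F α β
  have hjj := rel_jj F α β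
  have hji := rel_ji F α β
  have Sii : ∀ x ∈ S, x * ii ∈ S := by
    intro x hx
    induction hx using Submodule.span_induction with
    | mem x hx =>
      rcases hx with rfl | rfl | rfl | rfl
      · rw [one_mul]; exact hmi
      · rw [hii]; exact S.add_mem (S.smul_mem _ hm1) hmi
      · rw [hji]; exact S.add_mem hmij hmj
      · rw [mul_assoc, hji, mul_add, ← mul_assoc, hii, add_mul, smul_mul_assoc, one_mul]
        exact S.add_mem (S.add_mem (S.smul_mem _ hmj) hmij) hmij
    | zero => rw [zero_mul]; exact S.zero_mem
    | add x y hx hy px py => rw [add_mul]; exact S.add_mem px py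
    | smul a x hx px => rw [smul_mul_assoc]; exact S.smul_mem _ px
  have Sjj : ∀ x ∈ S, x * jj ∈ S := by
    intro x hx
    induction hx using Submodule.span_induction with
    | mem x hx =>
      rcases hx with rfl | rfl | rfl | rfl
      · rw [one_mul]; exact hmj
      · exact hmij
      · rw [hjj]; exact S.smul_mem _ hm1
      · rw [mul_assoc, hjj, mul_smul_comm, mul_one]; exact S.smul_mem _ hmi
    | zero => rw [zero_mul]; exact S.zero_mem
    | add x y hx hy px py => rw [add_mul]; exact S.add_mem px py
    | smul a x hx px => rw [smul_mul_assoc]; exact S.smul_mem _ px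
  have hmul : ∀ x ∈ S, ∀ y ∈ S, x * y ∈ S := by
    intro x hx y hy
    induction hy using Submodule.span_induction with
    | mem y hy =>
      rcases hy with rfl | rfl | rfl | rfl
      · rw [mul_one]; exact hx
      · exact Sii x hx
      · exact Sjj x hx
      · rw [← mul_assoc]; exact Sjj _ (Sii x hx)
    | zero => rw [mul_zero]; exact S.zero_mem
    | add y z hy hz py pz => rw [mul_add]; exact S.add_mem py pz
    | smul a y hy py => rw [mul_smul_comm]; exact S.smul_mem _ py
  rw [eq_top_iff]
  intro x hx; clear hx
  obtain ⟨x, rfl⟩ := RingQuot.mkAlgHom_surjective F (CyclicRel F 2 α β) x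
  induction x using FreeAlgebra.induction with
  | grade0 r =>
    rw [AlgHom.commutes, Algebra.algebraMap_eq_smul_one]
    exact S.smul_mem _ hm1
  | grade1 b =>
    cases b
    · exact hmi
    · exact hmj
  | mul x y px py => rw [map_mul]; exact hmul _ px _ py
  | add x y px py => rw [map_add]; exact S.add_mem px py

end spanning

/-! ### Backward direction: the explicit matrix representation -/

section bwd
variable (F : Type) [Field F] [CharP F 2] (α β y z : F)

noncomputable def Imat : Matrix (Fin 2) (Fin 2) F := !![y, z; β*z, y+1]
noncomputable def Jmat : Matrix (Fin 2) (Fin 2) F := !![0, 1; β, 0]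

lemma relI (h : α = y^2+y+β*z^2) :
    Imat F β y z * Imat F β y z - Imat F β y z = algebraMap F _ α := by
  have h2 := two_zero F
  ext p q
  fin_cases p <;> fin_cases q <;>
    simp [Imat, Matrix.mul_apply, Fin.sum_univ_two, Matrix.algebraMap_matrix_apply] <;>
    first
      | linear_combination -h - y*h2
      | linear_combination h + y*h2
      | linear_combination y*z*h2
      | linear_combination β*z*y*h2
      | linear_combination -h
      | linear_combination h

lemma relJ : Jmat F β * Jmat F β = algebraMap F _ β := by
  ext p q
  fin_cases p <;> fin_cases q <;>
    simp [Jmat, Matrix.mul_apply, Fin.sum_univ_two, Matrix.algebraMap_matrix_apply]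

lemma relC : Jmat F β * Imat F β y z = (Imat F β y z + 1) * Jmat F β := by
  have h2 := two_zero F
  ext p q
  fin_cases p <;> fin_cases q <;>
    simp [Imat, Jmat, Matrix.mul_apply, Fin.sum_univ_two, Matrix.one_apply] <;>
    first
      | ring1
      | linear_combination β*h2
      | linear_combination -β*h2
      | linear_combination β*z*h2
      | linear_combination -(β*z)*h2

noncomputable def toMat (h : α = y^2+y+β*z^2) :
    CyclicAlg F 2 α β →ₐ[F] Matrix (Fin 2) (Fin 2) F :=
  RingQuot.liftAlgHom F ⟨FreeAlgebra.lift F (fun b => if b then Jmat F β else Imat F β y z), by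
    rintro _ _ ⟨⟩ <;>
      simp only [map_sub, map_pow, map_mul, map_add, map_one, FreeAlgebra.lift_ι_apply,
        AlgHom.commutes, if_true, if_false, Bool.false_eq_true, pow_two]
    · exact relI F α β y z h
    · exact relJ F β
    · exact relC F β y z⟩

lemma toMat_i (h : α = y^2+y+β*z^2) :
    toMat F α β y z h (geni F α β) = Imat F β y z := by
  simp [toMat, geni, RingQuot.liftAlgHom_mkAlgHom_apply, FreeAlgebra.lift_ι_apply]

lemma toMat_j (h : α = y^2+y+β*z^2) :
    toMat F α β y z h (genj F α β) = Jmat F β := by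
  simp [toMat, genj, RingQuot.liftAlgHom_mkAlgHom_apply, FreeAlgebra.lift_ι_apply]

lemma toMat_surjective (hβ : β ≠ 0) (h : α = y^2+y+β*z^2) :
    Function.Surjective (toMat F α β y z h) := by
  have h2 := two_zero F
  set φ := toMat F α β y z h with hφ
  set R := φ.range with hR
  have hi : Imat F β y z ∈ R := ⟨geni F α β, toMat_i F α β y z h⟩
  have hj : Jmat F β ∈ R := ⟨genj F α β, toMat_j F α β y z h⟩
  have h22 : (!![0,0;0,1] : Matrix (Fin 2) (Fin 2) F) ∈ R := by
    have key : (!![0,0;0,1] : Matrix (Fin 2) (Fin 2) F)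
        = Imat F β y z + y • (1 : Matrix (Fin 2) (Fin 2) F) + z • Jmat F β := by
      ext p q
      fin_cases p <;> fin_cases q <;>
        simp [Imat, Jmat, Matrix.one_apply] <;>
        first
          | ring1
          | linear_combination -y*h2
          | linear_combination -z*h2
          | linear_combination -β*z*h2
    rw [key]
    exact R.add_mem (R.add_mem hi (R.smul_mem R.one_mem y)) (R.smul_mem hj z)
  have h11 : (!![1,0;0,0] : Matrix (Fin 2) (Fin 2) F) ∈ R := by
    have key : (!![1,0;0,0] : Matrix (Fin 2) (Fin 2) F)
        = 1 + !![0,0;0,1] := by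
      ext p q
      fin_cases p <;> fin_cases q <;> simp [Matrix.one_apply] <;>
        first
          | ring1
          | linear_combination h2
          | linear_combination -h2
    rw [key]
    exact R.add_mem R.one_mem h22
  have h12 : (!![0,1;0,0] : Matrix (Fin 2) (Fin 2) F) ∈ R := by
    have key : (!![0,1;0,0] : Matrix (Fin 2) (Fin 2) F)
        = !![1,0;0,0] * Jmat F β := by
      ext p q
      fin_cases p <;> fin_cases q <;> simp [Jmat, Matrix.mul_apply, Fin.sum_univ_two]
    rw [key]
    exact R.mul_mem h11 hj
  have h21 : (!![0,0;1,0] : Matrix (Fin 2) (Fin 2) F) ∈ R := by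
    have key : (!![0,0;1,0] : Matrix (Fin 2) (Fin 2) F)
        = β⁻¹ • (Jmat F β * !![1,0;0,0]) := by
      ext p q
      fin_cases p <;> fin_cases q <;>
        simp [Jmat, Matrix.mul_apply, Fin.sum_univ_two] <;>
        field_simp
    rw [key]
    exact R.smul_mem (R.mul_mem hj h11) _
  intro m
  have key : m = m 0 0 • !![1,0;0,0] + m 0 1 • !![0,1;0,0]
      + m 1 0 • !![0,0;1,0] + m 1 1 • !![0,0;0,1] := by
    ext p q
    fin_cases p <;> fin_cases q <;> simp
  have : m ∈ R := by
    rw [key]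
    exact R.add_mem (R.add_mem (R.add_mem (R.smul_mem h11 _) (R.smul_mem h12 _))
      (R.smul_mem h21 _)) (R.smul_mem h22 _)
  exact this

lemma toMat_bijective (hβ : β ≠ 0) (h : α = y^2+y+β*z^2) :
    Function.Bijective (toMat F α β y z h) := by
  classical
  have hsurj := toMat_surjective F α β y z hβ h
  refine ⟨?_, hsurj⟩
  have hfin : Module.Finite F (CyclicAlg F 2 α β) := by
    refine ⟨?_⟩
    rw [← span_top F α β]
    exact Submodule.fg_span (Set.toFinite _)
  have hrank4 : Module.finrank F (Matrix (Fin 2) (Fin 2) F) = 4 := by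
    rw [Module.finrank_matrix]
    simp
  have hle : Module.finrank F (CyclicAlg F 2 α β) ≤ 4 := by
    have hsp := finrank_span_le_card (R := F)
      ({1, geni F α β, genj F α β, geni F α β * genj F α β} : Set (CyclicAlg F 2 α β))
    rw [span_top F α β] at hsp
    rw [← finrank_top F (CyclicAlg F 2 α β)]
    refine hsp.trans ?_
    refine (Finset.card_le_card (Set.toFinset_subset_toFinset.mpr (subset_refl _))).trans ?_
    rw [Set.toFinset_insert, Set.toFinset_insert, Set.toFinset_insert, Set.toFinset_singleton]
    refine (Finset.card_insert_le _ _).trans ?_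
    refine Nat.add_le_add_right ((Finset.card_insert_le _ _).trans ?_) 1
    refine Nat.add_le_add_right ((Finset.card_insert_le _ _).trans ?_) 1
    simp
  have hge : 4 ≤ Module.finrank F (CyclicAlg F 2 α β) := by
    have hr : LinearMap.range (toMat F α β y z h).toLinearMap = ⊤ :=
      LinearMap.range_eq_top.mpr hsurj
    have := LinearMap.finrank_range_le (toMat F α β y z h).toLinearMap
    rw [hr, finrank_top, hrank4] at this
    exact this
  have heq : Module.finrank F (CyclicAlg F 2 α β)
      = Module.finrank F (Matrix (Fin 2) (Fin 2) F) := by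
    rw [hrank4]
    omega
  exact (LinearMap.injective_iff_surjective_of_finrank_eq_finrank
    (f := (toMat F α β y z h).toLinearMap) heq).mpr hsurj

end bwd

end QuatCharTwoAux

theorem quaternion_char_two_split_iff (F : Type) [Field F] [CharP F 2]
    (α β : F) (hβ : β ≠ 0) :
    Nonempty (CyclicAlg F 2 α β ≃ₐ[F] Matrix (Fin 2) (Fin 2) F) ↔
      ∃ y z : F, α = y ^ 2 + y + β * z ^ 2 := by
  constructor
  · rintro ⟨E⟩
    set I := E (QuatCharTwoAux.geni F α β) with hIdef
    set J := E (QuatCharTwoAux.genj F α β) with hJdef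
    have hI : I * I - I = algebraMap F _ α := by
      have := congrArg E (QuatCharTwoAux.rel_ii F α β)
      rw [map_mul, map_add, map_smul, map_one] at this
      rw [← hIdef] at this
      rw [this, Algebra.algebraMap_eq_smul_one]
      abel
    have hJ : J * J = algebraMap F _ β := by
      have := congrArg E (QuatCharTwoAux.rel_jj F α β)
      rw [map_mul, map_smul, map_one] at this
      rw [← hJdef] at this
      rw [this, Algebra.algebraMap_eq_smul_one]
    have hC : J * I = (I + 1) * J := by
      have := congrArg E (QuatCharTwoAux.rel_ji F α β)
      rw [map_mul, map_add, map_mul] at this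
      rw [← hIdef, ← hJdef] at this
      rw [this, add_one_mul]
    exact QuatCharTwoAux.fwd_matrix F α β hβ I J hI hJ hC
  · rintro ⟨y, z, h⟩
    exact ⟨AlgEquiv.ofBijective (QuatCharTwoAux.toMat F α β y z h) (QuatCharTwoAux.toMat_bijective F α β y z hβ h)⟩
end

section
/- Let F be a field of characteristic p > 0, α ∈ F, β ∈ F^×, and let E = F[℘^{-1}(α)] be the corresponding Artin–Schreier extension (assumed a field of degree p over F). If β is a norm from E/F, i.e., β = N_{E/F}(f) for some f ∈ E, then the cyclic algebra [α,β)_{p,F} is split. -/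
set_option linter.unusedSectionVars false

open Polynomial Module

section Prelim

variable {F : Type} [Field F] {p : ℕ} [Fact p.Prime] [CharP F p] {α : F}
variable {E : Type} [Field E] [Algebra F E]

private lemma AS_monic : ((X : F[X]) ^ p - X - C α).Monic := by
  have h2 : 2 ≤ p := (Fact.out : p.Prime).two_le
  have h1 : ((X : F[X]) + C α).degree ≤ 1 :=
    (degree_add_le _ _).trans (max_le (le_of_eq degree_X) (degree_C_le.trans zero_le_one))
  have e : ((X : F[X]) ^ p - X - C α) = X ^ p - (X + C α) := by ring
  rw [e]
  refine monic_X_pow_sub (h1.trans_lt ?_)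
  exact_mod_cast (by omega : 1 < p)

private lemma AS_degree : ((X : F[X]) ^ p - X - C α).degree = (p : WithBot ℕ) := by
  have h2 : 2 ≤ p := (Fact.out : p.Prime).two_le
  have e : ((X : F[X]) ^ p - X - C α) = X ^ p - (X + C α) := by ring
  rw [e, degree_sub_eq_left_of_degree_lt, degree_X_pow]
  rw [degree_X_pow]
  refine lt_of_le_of_lt (degree_add_le _ _) (max_lt ?_ ?_)
  · rw [degree_X]; exact_mod_cast (by omega : 1 < p)
  · exact lt_of_le_of_lt degree_C_le (by exact_mod_cast (by omega : 0 < p))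

private lemma AS_natDegree : ((X : F[X]) ^ p - X - C α).natDegree = p :=
  natDegree_eq_of_degree_eq_some AS_degree

private lemma AS_aeval {i : E} (hi : i ^ p - i = algebraMap F E α) :
    aeval i ((X : F[X]) ^ p - X - C α) = 0 := by
  simp [map_sub, map_pow, ← hi]

private lemma exists_sigma (hirr : Irreducible (X ^ p - X - C α : F[X]))
    {i : E} (hi : i ^ p - i = algebraMap F E α) (hgen : Algebra.adjoin F {i} = ⊤) :
    ∃ σ : E ≃ₐ[F] E, σ i = i + 1 ∧ FiniteDimensional F E ∧ finrank F E = p := by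
  haveI hFact : Fact (Irreducible (X ^ p - X - C α : F[X])) := ⟨hirr⟩
  have hq0 : (X ^ p - X - C α : F[X]) ≠ 0 := hirr.ne_zero
  have haev : aeval i ((X : F[X]) ^ p - X - C α) = 0 := AS_aeval hi
  set e0 : AdjoinRoot (X ^ p - X - C α : F[X]) →ₐ[F] E :=
    AdjoinRoot.liftAlgHom _ (Algebra.ofId F E) i haev with he0
  have hinj : Function.Injective e0 := e0.toRingHom.injective
  have hsurj : Function.Surjective e0 := by
    rw [← AlgHom.range_eq_top]
    rw [← top_le_iff, ← hgen]
    refine Algebra.adjoin_le ?_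
    rintro x rfl
    exact ⟨AdjoinRoot.root _, AdjoinRoot.liftAlgHom_root _ _ _ haev⟩
  let e := AlgEquiv.ofBijective e0 ⟨hinj, hsurj⟩
  haveI : FiniteDimensional F (AdjoinRoot (X ^ p - X - C α : F[X])) :=
    (AdjoinRoot.powerBasis hq0).finite
  haveI fd : FiniteDimensional F E := Module.Finite.equiv e.toLinearEquiv
  have hrank : finrank F E = p := by
    rw [← e.toLinearEquiv.finrank_eq, (AdjoinRoot.powerBasis hq0).finrank,
      AdjoinRoot.powerBasis_dim, AS_natDegree]
  haveI hchar : CharP E p := charP_of_injective_algebraMap (algebraMap F E).injective p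
  have haev2 : aeval (i + 1) ((X : F[X]) ^ p - X - C α) = 0 := by
    have hfrob : (i + 1) ^ p = i ^ p + 1 := by
      rw [add_pow_char, one_pow]
    simp only [map_sub, map_pow, aeval_X, aeval_C]
    rw [hfrob, ← hi]; ring
  set σ0 : E →ₐ[F] E := (AdjoinRoot.liftAlgHom _ (Algebra.ofId F E) (i + 1) haev2).comp (e.symm : E →ₐ[F] _)
    with hσ0
  have hσi : σ0 i = i + 1 := by
    have h1 : e.symm i = AdjoinRoot.root (X ^ p - X - C α : F[X]) := by
      rw [AlgEquiv.symm_apply_eq]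
      exact (AdjoinRoot.liftAlgHom_root _ _ _ haev).symm
    show (AdjoinRoot.liftAlgHom _ (Algebra.ofId F E) (i + 1) haev2) (e.symm i) = i + 1
    rw [h1]; exact AdjoinRoot.liftAlgHom_root _ _ _ haev2
  have hinj2 : Function.Injective σ0 := σ0.toRingHom.injective
  have hsurj2 : Function.Surjective σ0 :=
    (LinearMap.injective_iff_surjective (f := σ0.toLinearMap)).mp hinj2
  exact ⟨AlgEquiv.ofBijective σ0 ⟨hinj2, hsurj2⟩, hσi, fd, hrank⟩

end Prelim

section Two

set_option linter.unusedSectionVars false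

variable {F : Type} [Field F] {p : ℕ} [Fact p.Prime] [CharP F p] {α : F}
variable {E : Type} [Field E] [Algebra F E]

private lemma sigma_pow_apply {σ : E ≃ₐ[F] E} {i : E} (hσ : σ i = i + 1) (k : ℕ) :
    (σ ^ k) i = i + k := by
  induction k with
  | zero => simp
  | succ n ih =>
    rw [pow_succ', AlgEquiv.mul_apply, ih, map_add, hσ, map_natCast]
    push_cast; ring

private lemma alg_ext {i : E} (hgen : Algebra.adjoin F {i} = ⊤) {A : Type} [Semiring A]
    [Algebra F A] {φ₁ φ₂ : E →ₐ[F] A} (h : φ₁ i = φ₂ i) : φ₁ = φ₂ :=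
  AlgHom.ext_of_adjoin_eq_top hgen (fun x hx => by
    rw [Set.mem_singleton_iff] at hx; subst hx; exact h)

private lemma natCast_roots (hchar : CharP E p) {c : E} (hc : c ^ p = c) :
    ∃ k : Fin p, c = ((k : ℕ) : E) := by
  classical
  have h2 : 2 ≤ p := (Fact.out : p.Prime).two_le
  set P : E[X] := X ^ p - X with hP
  have hPm : P.Monic := by
    have : P = X ^ p - X - C (0 : E) := by simp [hP]
    rw [this]
    exact AS_monic (p := p)
  have hP0 : P ≠ 0 := hPm.ne_zero
  have hPdeg : P.natDegree = p := by
    have : P = X ^ p - X - C (0 : E) := by simp [hP]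
    rw [this]
    exact AS_natDegree (p := p)
  have hcastinj : Function.Injective (fun k : Fin p => ((k : ℕ) : E)) := by
    intro a b hab
    exact Fin.ext (CharP.natCast_injOn_Iio E p a.2 b.2 hab)
  set T : Finset E := Finset.image (fun k : Fin p => ((k : ℕ) : E)) Finset.univ with hT
  have hTcard : T.card = p := by
    rw [hT, Finset.card_image_of_injective _ hcastinj, Finset.card_univ, Fintype.card_fin]
  have hroot : ∀ k : Fin p, ((k : ℕ) : E) ^ p = ((k : ℕ) : E) := by
    intro k
    have := map_natCast (frobenius E p) (k : ℕ)
    rwa [frobenius_def] at this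
  have hsub : T ⊆ P.roots.toFinset := by
    intro x hx
    rw [hT, Finset.mem_image] at hx
    obtain ⟨k, -, rfl⟩ := hx
    rw [Multiset.mem_toFinset, mem_roots hP0]
    simp [hP, IsRoot, hroot k]
  have hle : P.roots.toFinset.card ≤ p := by
    calc P.roots.toFinset.card ≤ Multiset.card P.roots := P.roots.toFinset_card_le
    _ ≤ P.natDegree := P.card_roots'
    _ = p := hPdeg
  have hTeq : T = P.roots.toFinset := Finset.eq_of_subset_of_card_le hsub (hTcard ▸ hle)
  have hcmem : c ∈ P.roots.toFinset := by
    rw [Multiset.mem_toFinset, mem_roots hP0]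
    simp [hP, IsRoot, hc]
  rw [← hTeq, hT, Finset.mem_image] at hcmem
  obtain ⟨k, -, hk⟩ := hcmem
  exact ⟨k, hk.symm⟩

private lemma aut_equiv (hirr : Irreducible (X ^ p - X - C α : F[X]))
    {i : E} (hi : i ^ p - i = algebraMap F E α) (hgen : Algebra.adjoin F {i} = ⊤)
    {σ : E ≃ₐ[F] E} (hσ : σ i = i + 1) [FiniteDimensional F E]
    (hrank : finrank F E = p) :
    ∃ g : Fin p ≃ (E ≃ₐ[F] E), ∀ k : Fin p, g k = σ ^ (k : ℕ) := by
  haveI hchar : CharP E p := charP_of_injective_algebraMap (algebraMap F E).injective p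
  have hg_inj : Function.Injective (fun k : Fin p => σ ^ (k : ℕ)) := by
    intro a b hab
    have ha := sigma_pow_apply hσ (a : ℕ)
    have hb := sigma_pow_apply hσ (b : ℕ)
    have : i + ((a : ℕ) : E) = i + ((b : ℕ) : E) := by
      rw [← ha, ← hb]; exact congrArg (fun τ : E ≃ₐ[F] E => τ i) hab
    have := add_left_cancel this
    exact Fin.ext (CharP.natCast_injOn_Iio E p a.2 b.2 this)
  have hg_surj : Function.Surjective (fun k : Fin p => σ ^ (k : ℕ)) := by
    intro τ
    have hτroot : (τ i) ^ p - τ i = algebraMap F E α := by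
      have := congrArg τ hi
      rw [map_sub, map_pow, AlgEquiv.commutes] at this
      exact this
    have hc : (τ i - i) ^ p = τ i - i := by
      rw [sub_pow_char]
      have : (τ i) ^ p - i ^ p - (τ i - i) = 0 := by
        have h1 := hτroot
        have h2 := hi
        linear_combination h1 - h2
      linear_combination this
    obtain ⟨k, hk⟩ := natCast_roots hchar hc
    refine ⟨k, ?_⟩
    have heq : (σ ^ (k : ℕ)) i = τ i := by
      rw [sigma_pow_apply hσ, ← hk]; ring
    have : ((σ ^ (k : ℕ) : E ≃ₐ[F] E) : E →ₐ[F] E) = (τ : E →ₐ[F] E) :=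
      alg_ext hgen heq
    exact AlgEquiv.ext (fun x => AlgHom.congr_fun this x)
  exact ⟨Equiv.ofBijective _ ⟨hg_inj, hg_surj⟩, fun k => rfl⟩

private lemma AS_norm_prod (hirr : Irreducible (X ^ p - X - C α : F[X]))
    {i : E} (hi : i ^ p - i = algebraMap F E α) (hgen : Algebra.adjoin F {i} = ⊤)
    {σ : E ≃ₐ[F] E} (hσ : σ i = i + 1) [FiniteDimensional F E]
    (hrank : finrank F E = p) (f : E) :
    algebraMap F E (Algebra.norm F f) = ∏ m ∈ Finset.range p, (σ ^ m) f := by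
  obtain ⟨g, hg⟩ := aut_equiv hirr hi hgen hσ hrank
  haveI : IsGalois F E := by
    apply IsGalois.of_card_aut_eq_finrank
    rw [← Nat.card_congr g, Nat.card_eq_fintype_card, Fintype.card_fin, hrank]
  rw [Algebra.norm_eq_prod_automorphisms]
  rw [← Equiv.prod_comp g (fun τ : E ≃ₐ[F] E => τ f)]
  rw [Finset.prod_congr rfl (fun k _ => by rw [hg k])]
  exact (Fin.prod_univ_eq_prod_range (fun m => (σ ^ m) f) p)

end Two

section Three

set_option linter.unusedSectionVars false

variable {F : Type} [Field F] {p : ℕ} [Fact p.Prime] [CharP F p]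
variable {E : Type} [Field E] [Algebra F E]

private lemma lmul_app (a x : E) : (Algebra.lmul F E a) x = a * x := rfl

private lemma j0_pow_apply (σ : E ≃ₐ[F] E) (f : E) (k : ℕ) (x : E) :
    ((Algebra.lmul F E f * σ.toLinearMap) ^ k) x
      = (∏ m ∈ Finset.range k, (σ ^ m) f) * (σ ^ k) x := by
  induction k with
  | zero => simp
  | succ n ih =>
    have hs : σ ((∏ m ∈ Finset.range n, (σ ^ m) f) * (σ ^ n) x)
        = (∏ m ∈ Finset.range n, (σ ^ (m + 1)) f) * (σ ^ (n + 1)) x := by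
      rw [map_mul, map_prod]
      congr 1
      · exact Finset.prod_congr rfl (fun m _ => by rw [pow_succ', AlgEquiv.mul_apply])
      · rw [pow_succ', AlgEquiv.mul_apply]
    rw [pow_succ', Module.End.mul_apply, Module.End.mul_apply, ih,
      AlgEquiv.toLinearMap_apply, hs, lmul_app, Finset.prod_range_succ']
    simp only [pow_zero, AlgEquiv.one_apply]
    ring

private lemma rel_i_end (i : E) (α : F) (hi : i ^ p - i = algebraMap F E α) :
    (Algebra.lmul F E i) ^ p - Algebra.lmul F E i = algebraMap F (Module.End F E) α := by
  rw [← map_pow, ← map_sub, hi, AlgHom.commutes]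

private lemma rel_comm_end (i f : E) (σ : E ≃ₐ[F] E) (hσ : σ i = i + 1) :
    (Algebra.lmul F E f * σ.toLinearMap) * Algebra.lmul F E i
      = (Algebra.lmul F E i + 1) * (Algebra.lmul F E f * σ.toLinearMap) := by
  ext x
  simp only [Module.End.mul_apply, LinearMap.add_apply, Module.End.one_apply,
    AlgEquiv.toLinearMap_apply, lmul_app, map_mul, hσ]
  ring

private lemma rel_j_end (σ : E ≃ₐ[F] E) (f : E) (β : F) (hσp : σ ^ p = 1)
    (hprod : (∏ m ∈ Finset.range p, (σ ^ m) f) = algebraMap F E β) :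
    (Algebra.lmul F E f * σ.toLinearMap) ^ p = algebraMap F (Module.End F E) β := by
  ext x
  rw [j0_pow_apply, hσp, hprod, AlgEquiv.one_apply, Module.algebraMap_end_apply,
    Algebra.smul_def]

private lemma sigma_pow_p {σ : E ≃ₐ[F] E} {i : E} (hσ : σ i = i + 1)
    (hgen : Algebra.adjoin F {i} = ⊤) : σ ^ p = 1 := by
  haveI hchar : CharP E p := charP_of_injective_algebraMap (algebraMap F E).injective p
  have h : ((σ ^ p : E ≃ₐ[F] E) : E →ₐ[F] E) = ((1 : E ≃ₐ[F] E) : E →ₐ[F] E) := by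
    apply alg_ext hgen
    show (σ ^ p) i = (1 : E ≃ₐ[F] E) i
    rw [sigma_pow_apply hσ, AlgEquiv.one_apply, CharP.cast_eq_zero, add_zero]
  exact AlgEquiv.ext (fun x => AlgHom.congr_fun h x)

set_option maxHeartbeats 1000000 in
private lemma end_span (σ : E ≃ₐ[F] E) [FiniteDimensional F E] (hrank : finrank F E = p)
    (hdist : Function.Injective (fun k : Fin p => σ ^ (k : ℕ)))
    (T : Module.End F E) :
    ∃ c : Fin p → E,
      T = ∑ k : Fin p, Algebra.lmul F E (c k) * ((σ ^ (k : ℕ)).toLinearMap) := by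
  classical
  set ρ : Fin p → (E →ₗ[F] Module.End F E) := fun k =>
    (LinearMap.mulRight F ((σ ^ (k : ℕ)).toLinearMap)).comp (Algebra.lmul F E).toLinearMap
    with hρ
  set Φ : (Fin p → E) →ₗ[F] Module.End F E := LinearMap.lsum F (fun _ : Fin p => E) F ρ
    with hΦ
  have hΦ_apply : ∀ c : Fin p → E,
      Φ c = ∑ k : Fin p, Algebra.lmul F E (c k) * ((σ ^ (k : ℕ)).toLinearMap) := by
    intro c
    rw [hΦ, LinearMap.lsum_apply]
    simp only [hρ, LinearMap.coe_sum, Finset.sum_apply, LinearMap.comp_apply,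
      LinearMap.proj_apply, LinearMap.mulRight_apply, AlgHom.toLinearMap_apply]
  have hmono_inj : Function.Injective
      (fun k : Fin p => (((σ ^ (k : ℕ) : E ≃ₐ[F] E) : E →ₐ[F] E) : E →* E)) := by
    intro a b hab
    apply hdist
    apply AlgEquiv.ext
    intro x
    exact DFunLike.congr_fun hab x
  have hind : LinearIndependent E
      (fun k : Fin p => (((σ ^ (k : ℕ) : E ≃ₐ[F] E)) : E → E)) :=
    (linearIndependent_monoidHom E E).comp _ hmono_inj
  have hinj : Function.Injective Φ := by
    rw [← LinearMap.ker_eq_bot]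
    rw [Submodule.eq_bot_iff]
    intro c hc
    rw [LinearMap.mem_ker, hΦ_apply] at hc
    have hx : ∀ x : E, ∑ k : Fin p, c k * (σ ^ (k : ℕ)) x = 0 := by
      intro x
      have := congrArg (fun T : Module.End F E => T x) hc
      simpa only [LinearMap.coe_sum, Finset.sum_apply, Module.End.mul_apply,
        AlgEquiv.toLinearMap_apply, lmul_app, LinearMap.zero_apply] using this
    have hz : ∑ k : Fin p, c k • (((σ ^ (k : ℕ) : E ≃ₐ[F] E)) : E → E) = 0 := by
      funext x
      simpa only [Finset.sum_apply, Pi.smul_apply, smul_eq_mul, Pi.zero_apply] using hx x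
    have := Fintype.linearIndependent_iff.mp hind c hz
    funext k
    exact this k
  have hfr : finrank F (Fin p → E) = finrank F (Module.End F E) := by
    rw [Module.finrank_pi_fintype F, Module.finrank_linearMap]
    simp [hrank]
  have hsurj : Function.Surjective Φ :=
    (LinearMap.injective_iff_surjective_of_finrank_eq_finrank hfr).mp hinj
  obtain ⟨c, hc⟩ := hsurj T
  exact ⟨c, by rw [← hc, hΦ_apply]⟩

end Three


section Four

set_option linter.unusedSectionVars false

variable {F : Type} [Field F] {p : ℕ} [Fact p.Prime] [CharP F p]

private lemma cyclic_adjoin (α β : F) :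
    Algebra.adjoin F {RingQuot.mkAlgHom F (CyclicRel F p α β) (FreeAlgebra.ι F false),
      RingQuot.mkAlgHom F (CyclicRel F p α β) (FreeAlgebra.ι F true)} = ⊤ := by
  have h1 : Algebra.adjoin F (Set.range (FreeAlgebra.ι F : Bool → FreeAlgebra F Bool)) = ⊤ :=
    FreeAlgebra.adjoin_range_ι F Bool
  have h2 := congrArg (Subalgebra.map (RingQuot.mkAlgHom F (CyclicRel F p α β))) h1
  rw [AlgHom.map_adjoin, Algebra.map_top] at h2
  rw [(AlgHom.range_eq_top _).mpr (RingQuot.mkAlgHom_surjective F _)] at h2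
  have hset : (RingQuot.mkAlgHom F (CyclicRel F p α β)) ''
      (Set.range (FreeAlgebra.ι F : Bool → FreeAlgebra F Bool)) =
      {RingQuot.mkAlgHom F (CyclicRel F p α β) (FreeAlgebra.ι F false),
       RingQuot.mkAlgHom F (CyclicRel F p α β) (FreeAlgebra.ι F true)} := by
    ext x
    simp only [Set.mem_image, Set.mem_range, Set.mem_insert_iff, Set.mem_singleton_iff]
    constructor
    · rintro ⟨y, ⟨b, rfl⟩, rfl⟩
      cases b
      · exact Or.inl rfl
      · exact Or.inr rfl
    · rintro (rfl | rfl)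
      · exact ⟨_, ⟨false, rfl⟩, rfl⟩
      · exact ⟨_, ⟨true, rfl⟩, rfl⟩
  rwa [hset] at h2

private lemma cyclic_span (α β : F) :
    Submodule.span F (Set.range (fun kl : Fin p × Fin p =>
      RingQuot.mkAlgHom F (CyclicRel F p α β) (FreeAlgebra.ι F false) ^ (kl.1 : ℕ) *
      RingQuot.mkAlgHom F (CyclicRel F p α β) (FreeAlgebra.ι F true) ^ (kl.2 : ℕ))) = ⊤ := by
  have h2 : 2 ≤ p := (Fact.out : p.Prime).two_le
  haveI : NeZero p := ⟨by omega⟩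
  set I : CyclicAlg F p α β := RingQuot.mkAlgHom F (CyclicRel F p α β) (FreeAlgebra.ι F false)
    with hIdef
  set J : CyclicAlg F p α β := RingQuot.mkAlgHom F (CyclicRel F p α β) (FreeAlgebra.ι F true)
    with hJdef
  set W : Submodule F (CyclicAlg F p α β) :=
    Submodule.span F (Set.range (fun kl : Fin p × Fin p => I ^ (kl.1 : ℕ) * J ^ (kl.2 : ℕ)))
    with hWdef
  have hI : I ^ p = algebraMap F (CyclicAlg F p α β) α + I := by
    have h := RingQuot.mkAlgHom_rel F (CyclicRel.i (F := F) (p := p) (α := α) (β := β))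
    rw [map_sub, map_pow, AlgHom.commutes] at h
    rw [← hIdef] at h
    rw [sub_eq_iff_eq_add] at h
    exact h
  have hJ : J ^ p = algebraMap F (CyclicAlg F p α β) β := by
    have h := RingQuot.mkAlgHom_rel F (CyclicRel.j (F := F) (p := p) (α := α) (β := β))
    rw [map_pow, AlgHom.commutes] at h
    rw [← hJdef] at h
    exact h
  have hJI : J * I = (I + 1) * J := by
    have h := RingQuot.mkAlgHom_rel F (CyclicRel.comm (F := F) (p := p) (α := α) (β := β))
    rw [map_mul, map_mul, map_add, map_one] at h
    rw [← hIdef, ← hJdef] at h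
    exact h
  have hJIn : ∀ n : ℕ, J * I ^ n = (I + 1) ^ n * J := by
    intro n
    induction n with
    | zero => simp
    | succ m ih =>
      rw [pow_succ, ← mul_assoc, ih, mul_assoc, hJI, ← mul_assoc, ← pow_succ]
  have gmem : ∀ a b : Fin p, I ^ (a : ℕ) * J ^ (b : ℕ) ∈ W :=
    fun a b => Submodule.subset_span ⟨(a, b), rfl⟩
  have hone : (1 : CyclicAlg F p α β) ∈ W := by
    have := gmem 0 0
    simpa using this
  have hIW : ∀ x ∈ W, I * x ∈ W := by
    intro x hx
    induction hx using Submodule.span_induction with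
    | mem y hy =>
      obtain ⟨⟨a, b⟩, rfl⟩ := hy
      show I * (I ^ (a : ℕ) * J ^ (b : ℕ)) ∈ W
      rw [← mul_assoc, ← pow_succ']
      by_cases ha : (a : ℕ) + 1 < p
      · exact gmem ⟨(a : ℕ) + 1, ha⟩ b
      · have hap : (a : ℕ) + 1 = p := by omega
        rw [hap, hI, add_mul]
        refine add_mem ?_ ?_
        · rw [Algebra.algebraMap_eq_smul_one, smul_mul_assoc, one_mul]
          have := gmem ⟨0, by omega⟩ b
          simp only [Fin.val_mk, pow_zero, one_mul] at this
          exact Submodule.smul_mem _ _ this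
        · have := gmem ⟨1, by omega⟩ b
          simpa using this
    | zero => rw [mul_zero]; exact zero_mem _
    | add y z _ _ hy hz => rw [mul_add]; exact add_mem hy hz
    | smul r y _ hy => rw [mul_smul_comm]; exact Submodule.smul_mem _ _ hy
  have hpowW : ∀ (A : CyclicAlg F p α β), (∀ x ∈ W, A * x ∈ W) →
      ∀ (n : ℕ), ∀ x ∈ W, A ^ n * x ∈ W := by
    intro A hA n
    induction n with
    | zero => intro x hx; rw [pow_zero, one_mul]; exact hx
    | succ m ih =>
      intro x hx
      rw [pow_succ', mul_assoc]
      exact hA _ (ih x hx)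
  have hI1W : ∀ x ∈ W, (I + 1) * x ∈ W := by
    intro x hx
    rw [add_mul, one_mul]
    exact add_mem (hIW x hx) hx
  have hJW : ∀ x ∈ W, J * x ∈ W := by
    intro x hx
    induction hx using Submodule.span_induction with
    | mem y hy =>
      obtain ⟨⟨a, b⟩, rfl⟩ := hy
      show J * (I ^ (a : ℕ) * J ^ (b : ℕ)) ∈ W
      rw [← mul_assoc, hJIn, mul_assoc, ← pow_succ']
      by_cases hb : (b : ℕ) + 1 < p
      · refine hpowW (I + 1) hI1W (a : ℕ) _ ?_
        have := gmem ⟨0, by omega⟩ ⟨(b : ℕ) + 1, hb⟩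
        simpa using this
      · have hbp : (b : ℕ) + 1 = p := by omega
        rw [hbp, hJ, Algebra.algebraMap_eq_smul_one, mul_smul_comm]
        refine Submodule.smul_mem _ _ ?_
        simpa using hpowW (I + 1) hI1W (a : ℕ) 1 hone
    | zero => rw [mul_zero]; exact zero_mem _
    | add y z _ _ hy hz => rw [mul_add]; exact add_mem hy hz
    | smul r y _ hy => rw [mul_smul_comm]; exact Submodule.smul_mem _ _ hy
  rw [eq_top_iff]
  intro x _
  have hx : x ∈ Algebra.adjoin F ({I, J} : Set (CyclicAlg F p α β)) := by
    rw [hIdef, hJdef, cyclic_adjoin]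
    trivial
  have key : ∀ w ∈ W, x * w ∈ W := by
    refine Algebra.adjoin_induction
      (p := fun z _ => ∀ w ∈ W, z * w ∈ W) ?_ ?_ ?_ ?_ hx
    · intro z hz
      rcases Set.mem_insert_iff.mp hz with rfl | hz'
      · exact hIW
      · rw [Set.mem_singleton_iff] at hz'
        subst hz'
        exact hJW
    · intro r w hw
      rw [Algebra.algebraMap_eq_smul_one, smul_mul_assoc, one_mul]
      exact Submodule.smul_mem _ _ hw
    · intro y z _ _ hy hz w hw
      rw [add_mul]
      exact add_mem (hy w hw) (hz w hw)
    · intro y z _ _ hy hz w hw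
      rw [mul_assoc]
      exact hy _ (hz w hw)
  have := key 1 hone
  simpa using this

end Four

open Polynomial

set_option maxHeartbeats 1000000 in
theorem cyclicAlg_split_of_norm (F : Type) [Field F] (p : ℕ) [Fact p.Prime]
    [CharP F p] (α : F) (β : F) (hβ : β ≠ 0)
    (hirr : Irreducible (X ^ p - X - C α : F[X]))
    (E : Type) [Field E] [Algebra F E] (i : E)
    (hi : i ^ p - i = algebraMap F E α) (hgen : Algebra.adjoin F {i} = ⊤)
    (f : E) (hf : Algebra.norm F f = β) :
    Nonempty (CyclicAlg F p α β ≃ₐ[F] Matrix (Fin p) (Fin p) F) := by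
  classical
  have h2 : 2 ≤ p := (Fact.out : p.Prime).two_le
  obtain ⟨σ, hσ, fd, hrank⟩ := exists_sigma hirr hi hgen
  haveI := fd
  have hσp : σ ^ p = 1 := sigma_pow_p hσ hgen
  have hprod : (∏ m ∈ Finset.range p, (σ ^ m) f) = algebraMap F E β := by
    rw [← hf]
    exact (AS_norm_prod hirr hi hgen hσ hrank f).symm
  set j₀ : Module.End F E := Algebra.lmul F E f * σ.toLinearMap with hj₀
  set g : Bool → Module.End F E := fun b => if b then j₀ else Algebra.lmul F E i with hg
  set L : FreeAlgebra F Bool →ₐ[F] Module.End F E := FreeAlgebra.lift F g with hLdef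
  have hLfalse : L (FreeAlgebra.ι F false) = Algebra.lmul F E i := by
    rw [hLdef, FreeAlgebra.lift_ι_apply]
    simp [hg]
  have hLtrue : L (FreeAlgebra.ι F true) = j₀ := by
    rw [hLdef, FreeAlgebra.lift_ι_apply]
    simp [hg]
  have hrel : ∀ ⦃x y⦄, CyclicRel F p α β x y → L x = L y := by
    intro x y h
    induction h with
    | i =>
      rw [map_sub, map_pow, hLfalse, AlgHom.commutes]
      exact rel_i_end i α hi
    | j =>
      rw [map_pow, hLtrue, AlgHom.commutes]
      exact rel_j_end σ f β hσp hprod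
    | comm =>
      rw [map_mul, map_mul, map_add, map_one, hLfalse, hLtrue]
      exact rel_comm_end i f σ hσ
  set φ : CyclicAlg F p α β →ₐ[F] Module.End F E := RingQuot.liftAlgHom F ⟨L, hrel⟩ with hφdef
  have hφmk : ∀ x, φ (RingQuot.mkAlgHom F (CyclicRel F p α β) x) = L x :=
    fun x => RingQuot.liftAlgHom_mkAlgHom_apply F L hrel x
  set I : CyclicAlg F p α β := RingQuot.mkAlgHom F (CyclicRel F p α β) (FreeAlgebra.ι F false)
    with hIdef
  set J : CyclicAlg F p α β := RingQuot.mkAlgHom F (CyclicRel F p α β) (FreeAlgebra.ι F true)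
    with hJdef
  have hφI : φ I = Algebra.lmul F E i := by rw [hIdef, hφmk, hLfalse]
  have hφJ : φ J = j₀ := by rw [hJdef, hφmk, hLtrue]
  -- all left multiplications are in the range of φ
  have hlmul_mem : ∀ a : E, Algebra.lmul F E a ∈ φ.range := by
    intro a
    have hsub : Algebra.adjoin F ({i} : Set E) ≤ (φ.range).comap (Algebra.lmul F E) := by
      refine Algebra.adjoin_le ?_
      rintro x rfl
      exact (Subalgebra.mem_comap _ _ _).mpr ⟨I, hφI⟩
    rw [hgen] at hsub
    exact (Subalgebra.mem_comap _ _ _).mp (hsub (by trivial))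
  have hf0 : f ≠ 0 := by
    intro h0
    rw [h0, Algebra.norm_zero] at hf
    exact hβ hf.symm
  have hd0 : ∀ k : ℕ, (∏ m ∈ Finset.range k, (σ ^ m) f) ≠ 0 := by
    intro k
    refine Finset.prod_ne_zero_iff.mpr ?_
    intro m _
    intro hz
    exact hf0 ((σ ^ m).injective (hz.trans (map_zero _).symm))
  obtain ⟨gE, hgE⟩ := aut_equiv hirr hi hgen hσ hrank
  have hdist : Function.Injective (fun k : Fin p => σ ^ (k : ℕ)) := by
    have he : (fun k : Fin p => σ ^ (k : ℕ)) = gE := funext fun k => (hgE k).symm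
    rw [he]
    exact gE.injective
  have hsurjφ : Function.Surjective φ := by
    intro T
    obtain ⟨c, hc⟩ := end_span σ hrank hdist T
    have hTmem : T ∈ φ.range := by
      rw [hc]
      refine Subalgebra.sum_mem _ ?_
      intro k _
      have hdne : (∏ m ∈ Finset.range (k : ℕ), (σ ^ m) f) ≠ 0 := hd0 _
      have hjk : j₀ ^ (k : ℕ) =
          Algebra.lmul F E (∏ m ∈ Finset.range (k : ℕ), (σ ^ m) f) *
            (σ ^ (k : ℕ)).toLinearMap := by
        ext x
        rw [hj₀, j0_pow_apply]
        simp only [Module.End.mul_apply, AlgEquiv.toLinearMap_apply, lmul_app]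
      have hmem : Algebra.lmul F E (c k) * (σ ^ (k : ℕ)).toLinearMap
          = Algebra.lmul F E (c k * (∏ m ∈ Finset.range (k : ℕ), (σ ^ m) f)⁻¹) *
            j₀ ^ (k : ℕ) := by
        rw [hjk, ← mul_assoc, ← map_mul, mul_assoc (c k), inv_mul_cancel₀ hdne, mul_one]
      rw [hmem]
      exact mul_mem (hlmul_mem _) (pow_mem (show j₀ ∈ φ.range from ⟨J, hφJ⟩) _)
    exact hTmem
  -- injectivity via dimension count
  have hspan := cyclic_span (p := p) α β
  set v : Fin p × Fin p → CyclicAlg F p α β :=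
    fun kl => I ^ (kl.1 : ℕ) * J ^ (kl.2 : ℕ) with hv
  set h : (Fin p × Fin p → F) →ₗ[F] CyclicAlg F p α β := Fintype.linearCombination F v
    with hhdef
  have hhsurj : Function.Surjective h := by
    rw [← LinearMap.range_eq_top, hhdef, Fintype.range_linearCombination, hv]
    exact hspan
  set ψ : (Fin p × Fin p → F) →ₗ[F] Module.End F E := φ.toLinearMap.comp h with hψdef
  have hψsurj : Function.Surjective ψ := by
    intro T
    obtain ⟨y, hy⟩ := hsurjφ T
    obtain ⟨c, hc⟩ := hhsurj y
    exact ⟨c, by rw [hψdef, LinearMap.comp_apply, hc]; exact hy⟩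
  have hfr : finrank F (Fin p × Fin p → F) = finrank F (Module.End F E) := by
    rw [Module.finrank_pi, Module.finrank_linearMap, Fintype.card_prod, Fintype.card_fin, hrank]
  have hψinj : Function.Injective ψ :=
    (LinearMap.injective_iff_surjective_of_finrank_eq_finrank hfr).mpr hψsurj
  have hφinj : Function.Injective φ := by
    intro a b hab
    obtain ⟨ca, rfl⟩ := hhsurj a
    obtain ⟨cb, rfl⟩ := hhsurj b
    have : ψ ca = ψ cb := by
      rw [hψdef]
      simpa using hab
    rw [hψinj this]
  let A : CyclicAlg F p α β ≃ₐ[F] Module.End F E := AlgEquiv.ofBijective φ ⟨hφinj, hsurjφ⟩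
  let b : Basis (Fin p) F E := Module.finBasisOfFinrankEq F E hrank
  exact ⟨A.trans (algEquivMatrix b)⟩
end

section
/- Let F be a field of characteristic p > 0, α ∈ F with X^p - X - α irreducible over F, and consider the rational function field K = F(x) with the x-adic valuation. Then every norm from K[℘^{-1}(α)]/K has x-adic valuation divisible by p, while v(x) = 1; consequently x is not a norm from K[℘^{-1}(α)]/K. -/
open Polynomial

section ValuationLemmas
variable {F : Type} [Field F]
  (v : AddValuation (RatFunc F) (WithTop ℤ))
  (hvX : v RatFunc.X = (1 : ℤ))
  (hvF : ∀ c : F, c ≠ 0 → v (algebraMap F (RatFunc F) c) = (0 : ℤ))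

include hvF in
lemma v_C (c : F) : (0 : WithTop ℤ) ≤ v (algebraMap F[X] (RatFunc F) (C c)) := by
  rcases eq_or_ne c 0 with rfl | hc
  · simp [map_zero]
  · have h : algebraMap F[X] (RatFunc F) (C c) = algebraMap F (RatFunc F) c := by
      simp [RatFunc.algebraMap_C]
    rw [h, hvF c hc]
    norm_num

include hvX hvF in
lemma v_poly_nonneg (q : F[X]) : (0 : WithTop ℤ) ≤ v (algebraMap F[X] (RatFunc F) q) := by
  induction q using Polynomial.induction_on' with
  | add s t hs ht =>
    rw [map_add]
    refine le_trans ?_ (v.map_add _ _)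
    exact le_min hs ht
  | monomial n c =>
    rw [← C_mul_X_pow_eq_monomial, map_mul, map_pow, v.map_mul, v.map_pow,
      RatFunc.algebraMap_X, hvX]
    have h0 := v_C v hvF c
    have h1 : (0 : WithTop ℤ) ≤ n • ((1:ℤ) : WithTop ℤ) := by
      exact nsmul_nonneg (by norm_num) n
    calc (0 : WithTop ℤ) = 0 + 0 := by norm_num
    _ ≤ _ := add_le_add h0 h1

include hvX hvF in
lemma v_unit_poly (q : F[X]) (hq : q.coeff 0 ≠ 0) :
    v (algebraMap F[X] (RatFunc F) q) = (0 : ℤ) := by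
  have hrep : X * q.divX + C (q.coeff 0) = q := Polynomial.X_mul_divX_add q
  have h1 : 0 < v (algebraMap F[X] (RatFunc F) (X * q.divX)) := by
    rw [map_mul, v.map_mul, RatFunc.algebraMap_X, hvX]
    have := v_poly_nonneg v hvX hvF q.divX
    have h1 : ((1:ℤ) : WithTop ℤ) + 0 ≤ ((1:ℤ):WithTop ℤ) + v (algebraMap F[X] (RatFunc F) q.divX) :=
      add_le_add le_rfl this
    calc (0 : WithTop ℤ) < ((1:ℤ):WithTop ℤ) + 0 := by norm_num
    _ ≤ _ := h1
  have h2 : v (algebraMap F[X] (RatFunc F) (C (q.coeff 0))) = ((0:ℤ) : WithTop ℤ) := by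
    rw [RatFunc.algebraMap_C]; exact hvF _ hq
  have h3 := v.map_add_eq_of_lt_left (x := algebraMap F[X] (RatFunc F) (C (q.coeff 0)))
    (y := algebraMap F[X] (RatFunc F) (X * q.divX)) (by rw [h2]; exact_mod_cast h1)
  rw [← hrep, map_add, add_comm, h3, h2]

end ValuationLemmas

/-! ### The companion matrix of an Artin–Schreier polynomial -/

def compMat (K : Type*) [CommRing K] (a : K) (n : ℕ) : Matrix (Fin n) (Fin n) K :=
  Matrix.of fun k j => if (j:ℕ) = n - 1 then
      (if (k:ℕ) = 0 then a else if (k:ℕ) = 1 then 1 else 0)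
    else (if (k:ℕ) = (j:ℕ)+1 then 1 else 0)

lemma compMat_map {R S : Type*} [CommRing R] [CommRing S] (f : R →+* S) (a : R) (n : ℕ) :
    (compMat R a n).map f = compMat S (f a) n := by
  ext k j
  simp only [compMat, Matrix.map_apply, Matrix.of_apply, apply_ite f, map_one, map_zero]

lemma map_smul_matrix {R S : Type*} [CommRing R] [CommRing S] {n : Type*} (f : R →+* S)
    (q : R) (A : Matrix n n R) : (q • A).map f = f q • A.map f := by
  ext k j
  simp [Matrix.map_apply, Matrix.smul_apply, smul_eq_mul, map_mul]

section M
variable {R S : Type*} [Field R] [Ring S] [Algebra R S]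

lemma leftMulMatrix_gen (pb : PowerBasis R S) {p : ℕ} (hp : 2 ≤ p) (hdim : pb.dim = p) {a : R}
    (hgen : pb.gen ^ p = pb.gen + algebraMap R S a) :
    Algebra.leftMulMatrix pb.basis pb.gen = compMat R a pb.dim := by
  ext k j
  rw [Algebra.leftMulMatrix_eq_repr_mul]
  have hb : ∀ j : Fin pb.dim, pb.basis j = pb.gen ^ (j:ℕ) := fun j => by
    rw [pb.coe_basis]
  rw [hb j, ← pow_succ']
  by_cases hj : (j:ℕ) = pb.dim - 1
  · have hd2 : 2 ≤ pb.dim := hdim ▸ hp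
    have hj1 : (j:ℕ) + 1 = p := by have := j.isLt; omega
    have e1 : pb.gen ^ ((j:ℕ)+1) = pb.basis ⟨1, by omega⟩ + a • pb.basis ⟨0, by omega⟩ := by
      have : pb.gen ^ ((j:ℕ)+1) = pb.gen ^ p := by rw [hj1]
      rw [this, hgen, hb, hb]
      simp [Algebra.algebraMap_eq_smul_one]
    rw [e1, map_add, map_smul, pb.basis.repr_self, pb.basis.repr_self]
    simp only [Finsupp.coe_add, Finsupp.coe_smul, Pi.add_apply, Pi.smul_apply,
      Finsupp.single_apply, compMat, Matrix.of_apply, hj, if_pos rfl]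
    have h0 : (⟨0, by omega⟩ : Fin pb.dim) = k ↔ (k:ℕ) = 0 := by
      rw [Fin.ext_iff]; exact eq_comm
    have h1 : (⟨1, by omega⟩ : Fin pb.dim) = k ↔ (k:ℕ) = 1 := by
      rw [Fin.ext_iff]; exact eq_comm
    by_cases hk0 : (k:ℕ) = 0
    · rw [if_pos (h0.mpr hk0), if_neg (by rw [h1]; omega), if_pos hk0]
      simp
    · rw [if_neg (fun hh => hk0 (h0.mp hh)), if_neg hk0]
      by_cases hk1 : (k:ℕ) = 1
      · rw [if_pos (h1.mpr hk1), if_pos hk1]; simp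
      · rw [if_neg (fun hh => hk1 (h1.mp hh)), if_neg hk1]; simp
  · have hlt : (j:ℕ) + 1 < pb.dim := by have := j.isLt; omega
    have e1 : pb.gen ^ ((j:ℕ)+1) = pb.basis ⟨(j:ℕ)+1, hlt⟩ := by rw [hb]
    rw [e1, pb.basis.repr_self]
    simp only [Finsupp.single_apply, compMat, Matrix.of_apply, if_neg hj]
    have h1 : (⟨(j:ℕ)+1, hlt⟩ : Fin pb.dim) = k ↔ (k:ℕ) = (j:ℕ)+1 := by
      rw [Fin.ext_iff]; exact eq_comm
    by_cases hk : (k:ℕ) = (j:ℕ)+1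
    · rw [if_pos (h1.mpr hk), if_pos hk]
    · rw [if_neg (fun hh => hk (h1.mp hh)), if_neg hk]

end M

section M2
variable {R S : Type*} [Field R] [CommRing S] [Algebra R S]

lemma reindex_compMat {n m : ℕ} (a : R) (h : n = m) :
    Matrix.reindexAlgEquiv R R (finCongr h) (compMat R a n) = compMat R a m := by
  subst h
  simp [Matrix.reindexAlgEquiv_apply]

lemma norm_eq_det_compMat_sum (pb : PowerBasis R S) {p : ℕ} (hp : 2 ≤ p)
    (hdim : pb.dim = p) {a : R} (hgen : pb.gen ^ p = pb.gen + algebraMap R S a)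
    (c : Fin p → R) :
    Algebra.norm R (∑ j : Fin p, c j • pb.gen ^ (j:ℕ))
      = (∑ j : Fin p, c j • (compMat R a p)^(j:ℕ)).det := by
  rw [Algebra.norm_eq_matrix_det pb.basis]
  have h1 : Algebra.leftMulMatrix pb.basis (∑ j : Fin p, c j • pb.gen ^ (j:ℕ))
      = ∑ j : Fin p, c j • (compMat R a pb.dim)^(j:ℕ) := by
    rw [map_sum]
    refine Finset.sum_congr rfl fun j _ => ?_
    rw [map_smul, map_pow, leftMulMatrix_gen pb hp hdim hgen]
  have h2 : (Matrix.reindexAlgEquiv R R (finCongr hdim))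
        (∑ j : Fin p, c j • (compMat R a pb.dim)^(j:ℕ))
      = ∑ j : Fin p, c j • (compMat R a p)^(j:ℕ) := by
    rw [map_sum]
    refine Finset.sum_congr rfl fun j _ => ?_
    rw [map_smul, map_pow, reindex_compMat a hdim]
  rw [h1, ← h2, Matrix.reindexAlgEquiv_apply, Matrix.det_reindex_self]

end M2

lemma keyDet {F : Type} [Field F] {p : ℕ} [Fact p.Prime] [CharP F p] {α : F}
    (hirr : Irreducible (X ^ p - X - C α : F[X])) (c : Fin p → F) (hc : c ≠ 0) :
    (∑ j : Fin p, c j • (compMat F α p)^(j:ℕ)).det ≠ 0 := by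
  have hp2 : 2 ≤ p := (Fact.out : p.Prime).two_le
  set P₀ : F[X] := X ^ p - X - C α with hP₀
  have hdeg : P₀.natDegree = p := by
    rw [hP₀, natDegree_sub_C, FiniteField.X_pow_card_sub_X_natDegree_eq _ (by omega)]
  have hne : P₀ ≠ 0 := fun h => by simp [h] at hdeg; omega
  haveI := Fact.mk hirr
  let F' := AdjoinRoot P₀
  let pb' : PowerBasis F F' := AdjoinRoot.powerBasis hne
  have hdim : pb'.dim = p := by
    show P₀.natDegree = p
    exact hdeg
  have hgenrel : pb'.gen ^ p = pb'.gen + algebraMap F F' α := by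
    have h0 : aeval (AdjoinRoot.root P₀) P₀ = 0 := AdjoinRoot.aeval_eq P₀ ▸ by
      simp [AdjoinRoot.mk_self]
    have : (AdjoinRoot.root P₀) ^ p - AdjoinRoot.root P₀ - algebraMap F F' α = 0 := by
      simp [hP₀, map_sub, map_pow] at h0; exact h0
    have h2 : pb'.gen = AdjoinRoot.root P₀ := AdjoinRoot.powerBasis_gen hne
    rw [h2]
    linear_combination this
  rw [← norm_eq_det_compMat_sum pb' hp2 hdim hgenrel c]
  set x : F' := ∑ j : Fin p, c j • pb'.gen ^ (j:ℕ) with hx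
  have hxne : x ≠ 0 := by
    intro h0
    apply hc
    have hli := pb'.basis.linearIndependent
    have hx2 : ∑ j : Fin pb'.dim, c (Fin.cast hdim j) • pb'.basis j = 0 := by
      rw [← h0, hx]
      rw [← Fintype.sum_equiv (finCongr hdim) _ (fun j : Fin p => c j • pb'.gen ^ (j:ℕ)) ?_]
      · intro j
        rw [pb'.coe_basis]
        rfl
    have := Fintype.linearIndependent_iff.mp hli _ hx2
    funext j
    simpa using this (Fin.cast hdim.symm j)
  exact (Algebra.norm_ne_zero_iff_of_basis pb'.basis).mpr hxne

/-! ### Artin–Schreier: degree of the minimal polynomial -/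

lemma AS_minpoly_deg {K E : Type*} [Field K] [Field E] [Algebra K E] {p : ℕ}
    [Fact p.Prime] [CharP K p] {a : K} (i : E)
    (hi : i ^ p - i = algebraMap K E a) (hnoroot : ∀ k : K, k ^ p - k ≠ a) :
    (minpoly K i).natDegree = p := by
  have hp2 : 2 ≤ p := (Fact.out : p.Prime).two_le
  haveI : CharP E p := charP_of_injective_algebraMap (algebraMap K E).injective p
  set P : K[X] := X ^ p - X - C a with hP
  have hPdeg : P.natDegree = p := by
    rw [hP, natDegree_sub_C, FiniteField.X_pow_card_sub_X_natDegree_eq _ (by omega)]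
  have hPne : P ≠ 0 := fun h => by simp [h] at hPdeg; omega
  have hPmonic : P.Monic := by
    have hdeg : ((X : K[X]) + C a).degree < (p : ℕ) := by
      refine lt_of_le_of_lt (degree_add_le _ _) ?_
      rw [max_lt_iff]
      constructor
      · rw [degree_X]; exact_mod_cast by omega
      · exact lt_of_le_of_lt degree_C_le (by exact_mod_cast (by omega : 0 < p))
    have := monic_X_pow_sub (p := (X : K[X]) + C a) (n := p) hdeg
    simpa [hP, sub_sub] using this
  have haev : aeval i P = 0 := by
    rw [hP]
    simp only [map_sub, map_pow, aeval_X, aeval_C]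
    rw [hi]; ring
  have hint : IsIntegral K i := ⟨P, hPmonic, haev⟩
  set g : K[X] := minpoly K i with hg
  have hdvd : g ∣ P := minpoly.dvd K i haev
  have hdle : g.natDegree ≤ p := hPdeg ▸ natDegree_le_of_dvd hdvd hPne
  have hdpos : 0 < g.natDegree := minpoly.natDegree_pos hint
  by_contra hne
  have hdlt : g.natDegree < p := lt_of_le_of_ne hdle hne
  set φ : ZMod p →+* E := ZMod.castHom dvd_rfl E with hφ
  have hQ : (X ^ p - X : (ZMod p)[X]) = ∏ c : ZMod p, (X - C c) := by
    have hm : (X ^ p - X : (ZMod p)[X]).Monic := by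
      apply monic_X_pow_sub
      rw [degree_X]
      exact_mod_cast by omega
    have hroots : (X ^ p - X : (ZMod p)[X]).roots = Finset.univ.val := by
      have := FiniteField.roots_X_pow_card_sub_X (ZMod p)
      rwa [ZMod.card p] at this
    have hcard : (X ^ p - X : (ZMod p)[X]).roots.card = (X ^ p - X : (ZMod p)[X]).natDegree := by
      rw [hroots, FiniteField.X_pow_card_sub_X_natDegree_eq _ (by omega)]
      simpa using (ZMod.card p).symm
    have := prod_multiset_X_sub_C_of_monic_of_roots_card_eq hm hcard
    rw [← this, hroots]
    rfl
  have hprod : P.map (algebraMap K E) = ∏ c : ZMod p, (X - C (i + φ c)) := by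
    have h1 : (X ^ p - X : E[X]) = ∏ c : ZMod p, (X - C (φ c)) := by
      have h0 := congrArg (Polynomial.map φ) hQ
      rw [Polynomial.map_sub, Polynomial.map_pow, map_X, Polynomial.map_prod] at h0
      simp only [Polynomial.map_sub, map_X, map_C] at h0
      exact h0
    have h2 := congrArg (fun q : E[X] => q.comp (X - C i)) h1
    simp only [sub_comp, pow_comp, X_comp, prod_comp, C_comp] at h2
    have h3 : ((X : E[X]) - C i) ^ p = X ^ p - C i ^ p :=
      sub_pow_char (x := (X : E[X])) (y := C i)
    rw [h3] at h2
    have h4 : P.map (algebraMap K E) = X ^ p - X - C (algebraMap K E a) := by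
      rw [hP]; simp [Polynomial.map_sub, Polynomial.map_pow]
    rw [h4, ← hi]
    calc X ^ p - X - C (i ^ p - i)
        = X ^ p - C i ^ p - (X - C i) := by rw [C_sub, C_pow]; ring
      _ = ∏ c : ZMod p, (X - C i - C (φ c)) := h2
      _ = ∏ c : ZMod p, (X - C (i + φ c)) := by
          refine Finset.prod_congr rfl fun c _ => ?_
          rw [C_add]; ring
  set ψE := algebraMap K E with hψE
  set gE := g.map ψE with hgE
  have hgmonic : g.Monic := minpoly.monic hint
  have hgEmonic : gE.Monic := hgmonic.map ψE
  have hdvdE : gE ∣ P.map ψE := Polynomial.map_dvd ψE hdvd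
  have hPmapne : P.map ψE ≠ 0 := by
    simpa using (Polynomial.map_ne_zero hPne : P.map ψE ≠ 0)
  have hsplitsP : (P.map ψE).Splits := by
    rw [hprod]; exact Splits.prod fun c _ => Splits.X_sub_C _
  have hsplits : gE.Splits := hsplitsP.of_dvd hPmapne hdvdE
  have hsum : gE.nextCoeff = -gE.roots.sum :=
    hsplits.nextCoeff_eq_neg_sum_roots_of_monic hgEmonic
  have hcard : gE.roots.card = g.natDegree := by
    have h1 := hsplits.natDegree_eq_card_roots
    rw [← h1, hgE, natDegree_map]
  have hrootsle : gE.roots ≤ (P.map ψE).roots := roots.le_of_dvd hPmapne hdvdE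
  have hrootform : ∀ μ ∈ gE.roots, ∃ c : ZMod p, μ = i + φ c := by
    intro μ hμ
    have hμP : μ ∈ (P.map ψE).roots := Multiset.mem_of_le hrootsle hμ
    have hir : (P.map ψE).IsRoot μ := (mem_roots hPmapne).mp hμP
    rw [hprod] at hir
    unfold Polynomial.IsRoot at hir
    rw [eval_prod] at hir
    obtain ⟨c, _, hc⟩ := Finset.prod_eq_zero_iff.mp hir
    simp only [eval_sub, eval_X, eval_C] at hc
    exact ⟨c, sub_eq_zero.mp hc⟩
  set Srange : Subring E := (algebraMap K E).range with hSr
  have hsum_mem : gE.roots.sum ∈ Srange := by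
    have : gE.roots.sum = -(ψE g.nextCoeff) := by
      rw [← nextCoeff_map (ψE.injective), ← hgE]
      rw [hsum]; ring
    rw [this]
    exact Subring.neg_mem _ ⟨g.nextCoeff, rfl⟩
  have hT : (gE.roots.map (fun μ => μ - i)).sum = gE.roots.sum - g.natDegree • i := by
    rw [Multiset.sum_map_sub]
    simp [hcard]
  have hT_mem : (gE.roots.map (fun μ => μ - i)).sum ∈ Srange := by
    refine Subring.multiset_sum_mem _ _ fun t ht => ?_
    obtain ⟨μ, hμ, rfl⟩ := Multiset.mem_map.mp ht
    obtain ⟨c, rfl⟩ := hrootform μ hμ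
    have : i + φ c - i = φ c := by ring
    rw [this]
    have hcomp : φ c = algebraMap K E ((ZMod.castHom dvd_rfl K) c) := by
      have : (algebraMap K E).comp (ZMod.castHom dvd_rfl K) = φ := Subsingleton.elim _ _
      rw [← this]; rfl
    exact ⟨_, hcomp.symm⟩
  have hdi_mem : (g.natDegree : E) * i ∈ Srange := by
    have h1 : g.natDegree • i = gE.roots.sum - (gE.roots.map (fun μ => μ - i)).sum := by
      rw [hT]; ring
    have h2 : g.natDegree • i ∈ Srange := by
      rw [h1]; exact Subring.sub_mem _ hsum_mem hT_mem
    rwa [nsmul_eq_mul] at h2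
  have hdK : ((g.natDegree : K)) ≠ 0 := by
    rw [Ne, CharP.cast_eq_zero_iff K p]
    intro hdvd'
    have := Nat.le_of_dvd hdpos hdvd'
    omega
  have hi_mem : i ∈ Srange := by
    obtain ⟨y, hy⟩ := hdi_mem
    refine ⟨(g.natDegree : K)⁻¹ * y, ?_⟩
    rw [map_mul, hy]
    rw [show ((g.natDegree : ℕ) : E) * i = algebraMap K E (g.natDegree : K) * i by
      rw [map_natCast]]
    rw [← mul_assoc, ← map_mul, inv_mul_cancel₀ hdK, map_one, one_mul]
  obtain ⟨k, hk⟩ := hi_mem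
  apply hnoroot k
  have : algebraMap K E (k ^ p - k) = algebraMap K E a := by
    rw [map_sub, map_pow, hk, hi]
  exact (algebraMap K E).injective this

/-! ### No Artin–Schreier root in the rational function field -/

lemma F_no_root {F : Type} [Field F] {p : ℕ} [Fact p.Prime] {α : F}
    (hirr : Irreducible (X ^ p - X - C α : F[X])) (c : F) : c ^ p - c ≠ α := by
  have hp2 : 2 ≤ p := (Fact.out : p.Prime).two_le
  intro hc
  have hroot : IsRoot (X ^ p - X - C α : F[X]) c := by
    simp [IsRoot, hc]
  obtain ⟨t, ht⟩ := (dvd_iff_isRoot).mpr hroot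
  rcases hirr.isUnit_or_isUnit ht with hu | hu
  · exact Polynomial.not_isUnit_X_sub_C c hu
  · have hdeg : (X ^ p - X - C α : F[X]).natDegree = p := by
      rw [natDegree_sub_C]
      exact FiniteField.X_pow_card_sub_X_natDegree_eq _ (by omega)
    have htne : t ≠ 0 := by
      intro h0
      rw [h0, mul_zero] at ht
      rw [ht] at hdeg
      simp at hdeg; omega
    have h1 : ((X : F[X]) - C c) ≠ 0 := X_sub_C_ne_zero c
    have := natDegree_mul h1 htne
    rw [← ht, hdeg, natDegree_X_sub_C, Polynomial.natDegree_eq_zero_of_isUnit hu] at this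
    omega

lemma K_no_root {F : Type} [Field F] {p : ℕ} [Fact p.Prime] [CharP F p] {α : F}
    (hirr : Irreducible (X ^ p - X - C α : F[X])) (k : RatFunc F) :
    k ^ p - k ≠ algebraMap F (RatFunc F) α := by
  have hp2 : 2 ≤ p := (Fact.out : p.Prime).two_le
  intro hk
  set ψ := algebraMap F[X] (RatFunc F) with hψ
  have hψinj : Function.Injective ψ := IsFractionRing.injective F[X] (RatFunc F)
  set n := k.num with hn
  set d := k.denom with hd
  have hdne : d ≠ 0 := k.denom_ne_zero
  have hψd : ψ d ≠ 0 := fun h => hdne (by simpa using hψinj (h.trans (map_zero ψ).symm))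
  have hknd : k * ψ d = ψ n := by
    rw [← RatFunc.num_div_denom k]
    exact div_mul_cancel₀ _ hψd
  have hpoly : n ^ p = n * d ^ (p - 1) + C α * d ^ p := by
    apply hψinj
    have h2 : k ^ p = k + ψ (C α) := by
      have h3 : ψ (C α) = algebraMap F (RatFunc F) α := by
        simp [hψ, RatFunc.algebraMap_C]
      rw [h3, ← hk]; ring
    have hd1 : ψ d ^ p = ψ d * ψ d ^ (p - 1) := by
      rw [← pow_succ']
      congr 1
      omega
    calc ψ (n ^ p) = k ^ p * ψ d ^ p := by rw [map_pow, ← hknd, mul_pow]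
    _ = (k + ψ (C α)) * ψ d ^ p := by rw [h2]
    _ = (k * ψ d) * ψ d ^ (p - 1) + ψ (C α) * ψ d ^ p := by rw [hd1]; ring
    _ = ψ (n * d ^ (p - 1) + C α * d ^ p) := by
        rw [hknd, map_add, map_mul, map_mul, map_pow, map_pow]
  have hdvd : d ∣ n ^ p := by
    refine ⟨n * d ^ (p - 2) + C α * d ^ (p - 1), ?_⟩
    rw [hpoly]
    have e1 : d * (n * d ^ (p-2)) = n * d ^ (p-1) := by
      rw [show p - 1 = (p-2) + 1 by omega, pow_succ]; ring
    have e2 : d * (C α * d ^ (p-1)) = C α * d ^ p := by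
      have : d ^ p = d * d ^ (p-1) := by rw [← pow_succ']; congr 1; omega
      rw [this]; ring
    rw [mul_add, e1, e2]
  have hcop : IsCoprime (n ^ p) d := (RatFunc.isCoprime_num_denom k).pow_left
  have hdunit : IsUnit d := hcop.isUnit_of_dvd' hdvd dvd_rfl
  have hd1 : d = 1 := (RatFunc.monic_denom k).eq_one_of_isUnit hdunit
  have hpoly2 : n ^ p = n + C α := by
    rw [hpoly, hd1]; simp
  have hdn : n.natDegree = 0 := by
    by_contra hdn
    have h1 : (n ^ p).natDegree = p * n.natDegree := natDegree_pow n p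
    have h2 : (n + C α).natDegree ≤ max n.natDegree (C α).natDegree := natDegree_add_le _ _
    rw [← hpoly2, h1] at h2
    have h3 : (C α).natDegree = 0 := natDegree_C α
    rw [h3] at h2
    have h5 : 1 ≤ n.natDegree := Nat.one_le_iff_ne_zero.mpr hdn
    have h4 : n.natDegree ⊔ 0 = n.natDegree := by omega
    rw [h4] at h2
    nlinarith
  obtain ⟨c, hc⟩ := natDegree_eq_zero.mp hdn
  apply F_no_root hirr c
  have : C (c ^ p - c) = C α := by
    rw [C_sub, C_pow, hc, hpoly2]; ring
  exact C_injective this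

/-! ### Main theorem -/

set_option maxHeartbeats 1000000 in
set_option synthInstance.maxHeartbeats 400000 in
theorem norms_have_valuation_divisible_by_p (F : Type) [Field F] (p : ℕ)
    [Fact p.Prime] [CharP F p] (α : F)
    (hirr : Irreducible (X ^ p - X - C α : F[X]))
    (v : AddValuation (RatFunc F) (WithTop ℤ))
    (hvX : v RatFunc.X = (1 : ℤ))
    (hvF : ∀ c : F, c ≠ 0 → v (algebraMap F (RatFunc F) c) = (0 : ℤ))
    (E : Type) [Field E] [Algebra (RatFunc F) E] (i : E)
    (hi : i ^ p - i = algebraMap (RatFunc F) E (algebraMap F (RatFunc F) α))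
    (hgen : Algebra.adjoin (RatFunc F) {i} = ⊤) :
    (∀ f : E, f ≠ 0 → ∃ n : ℤ, v (Algebra.norm (RatFunc F) f) = ((p * n : ℤ) : WithTop ℤ)) ∧
    ¬ ∃ f : E, Algebra.norm (RatFunc F) f = RatFunc.X := by
  classical
  have hp2 : 2 ≤ p := (Fact.out : p.Prime).two_le
  haveI : CharP (RatFunc F) p := charP_of_injective_algebraMap (algebraMap F (RatFunc F)).injective p
  set α' : (RatFunc F) := algebraMap F (RatFunc F) α with hα'
  have hnoroot : ∀ k : (RatFunc F), k ^ p - k ≠ α' := K_no_root hirr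
  have hdegm : (minpoly (RatFunc F) i).natDegree = p := AS_minpoly_deg i hi hnoroot
  have hPmonic : ((X : (RatFunc F)[X]) ^ p - X - C α').Monic := by
    have hdeg : ((X : (RatFunc F)[X]) + C α').degree < (p : ℕ) := by
      refine lt_of_le_of_lt (degree_add_le _ _) ?_
      rw [max_lt_iff]
      constructor
      · rw [degree_X]; exact_mod_cast by omega
      · exact lt_of_le_of_lt degree_C_le (by exact_mod_cast (by omega : 0 < p))
    have := monic_X_pow_sub (p := (X : (RatFunc F)[X]) + C α') (n := p) hdeg
    simpa [sub_sub] using this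
  have haev : aeval i ((X : (RatFunc F)[X]) ^ p - X - C α') = 0 := by
    simp only [map_sub, map_pow, aeval_X, aeval_C]
    rw [hi]; ring
  have hint : IsIntegral (RatFunc F) i := ⟨_, hPmonic, haev⟩
  let equiv : (Algebra.adjoin (RatFunc F) ({i} : Set E)) ≃ₐ[(RatFunc F)] E :=
    (Subalgebra.equivOfEq _ _ hgen).trans Subalgebra.topEquiv
  let pb : PowerBasis (RatFunc F) E := (Algebra.adjoin.powerBasis hint).map equiv
  have hgenpb : pb.gen = i := rfl
  have hdim : pb.dim = p := by
    show (minpoly (RatFunc F) i).natDegree = p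
    exact hdegm
  have hgenrel : pb.gen ^ p = pb.gen + algebraMap (RatFunc F) E α' := by
    rw [hgenpb]
    linear_combination hi
  haveI : Module.Free (RatFunc F) E := Module.Free.of_basis pb.basis
  haveI : Module.Finite (RatFunc F) E := Module.Finite.of_basis pb.basis
  have hfinrank : Module.finrank (RatFunc F) E = p := by rw [pb.finrank, hdim]
  set ψ := algebraMap F[X] (RatFunc F) with hψ
  have hψinj : Function.Injective ψ := IsFractionRing.injective F[X] (RatFunc F)
  have part1 : ∀ f : E, f ≠ 0 →
      ∃ n : ℤ, v (Algebra.norm (RatFunc F) f) = ((p * n : ℤ) : WithTop ℤ) := by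
    intro f hf
    set a : Fin pb.dim → (RatFunc F) := fun j => pb.basis.repr f j with ha
    have hane : ∃ j, a j ≠ 0 := by
      by_contra h0
      push_neg at h0
      apply hf
      have : pb.basis.repr f = 0 := by
        ext j; exact h0 j
      simpa using (LinearEquiv.map_eq_zero_iff pb.basis.repr).mp this
    obtain ⟨b, hb⟩ := IsLocalization.exist_integer_multiples
      (nonZeroDivisors F[X]) Finset.univ a
    have hb' : ∀ j : Fin pb.dim, ∃ pf : F[X], ψ pf = ψ (b : F[X]) * a j := by
      intro j
      obtain ⟨pf, hpf⟩ := hb j (Finset.mem_univ j)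
      exact ⟨pf, by rw [hpf, Algebra.smul_def]⟩
    choose pf hpf using hb'
    have hbne : (b : F[X]) ≠ 0 := nonZeroDivisors.coe_ne_zero b
    have hψb : ψ (b : F[X]) ≠ 0 := fun h => hbne (hψinj (h.trans (map_zero ψ).symm))
    have hpfne : ∃ j, pf j ≠ 0 := by
      obtain ⟨j, hj⟩ := hane
      refine ⟨j, fun h0 => hj ?_⟩
      have h2 := hpf j
      rw [h0, map_zero] at h2
      exact (mul_eq_zero.mp h2.symm).resolve_left hψb
    set S : Finset (Fin pb.dim) := Finset.univ.filter (fun j => pf j ≠ 0) with hS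
    have hSne : S.Nonempty := by
      obtain ⟨j, hj⟩ := hpfne
      exact ⟨j, by simp [hS, hj]⟩
    set kk : ℕ := S.inf' hSne (fun j => rootMultiplicity 0 (pf j)) with hkk
    have hXdvd : ∀ j, X ^ kk ∣ pf j := by
      intro j
      rcases eq_or_ne (pf j) 0 with h0 | h0
      · rw [h0]; exact dvd_zero _
      · have hjS : j ∈ S := by simp [hS, h0]
        have h1 : kk ≤ rootMultiplicity 0 (pf j) := Finset.inf'_le _ hjS
        have h2 : (X - C (0:F)) ^ rootMultiplicity 0 (pf j) ∣ pf j :=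
          pow_rootMultiplicity_dvd _ _
        rw [C_0, sub_zero] at h2
        exact dvd_trans (pow_dvd_pow X h1) h2
    choose q hq using hXdvd
    obtain ⟨j₀, hj₀S, hj₀⟩ := Finset.exists_mem_eq_inf' hSne
      (fun j => rootMultiplicity 0 (pf j))
    have hpfj₀ : pf j₀ ≠ 0 := by
      have := hj₀S
      rw [hS, Finset.mem_filter] at this
      exact this.2
    have hq₀ : (q j₀).coeff 0 ≠ 0 := by
      intro h0
      have hXq : X ∣ q j₀ := X_dvd_iff.mpr h0
      obtain ⟨t, ht⟩ := hXq
      have hdd : (X:F[X]) ^ (kk+1) ∣ pf j₀ := ⟨t, by rw [hq j₀, ht]; ring⟩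
      have h2 : kk + 1 ≤ rootMultiplicity 0 (pf j₀) := by
        rw [le_rootMultiplicity_iff hpfj₀]
        simpa using hdd
      omega
    set c : (RatFunc F) := ψ (X ^ kk) / ψ (b : F[X]) with hc
    have hψXk : ψ (X ^ kk) ≠ 0 := fun h =>
      pow_ne_zero kk Polynomial.X_ne_zero (hψinj (h.trans (map_zero ψ).symm))
    have hcne : c ≠ 0 := div_ne_zero hψXk hψb
    have hacq : ∀ j, a j = c * ψ (q j) := by
      intro j
      have h1 : ψ (b:F[X]) * a j = ψ (X ^ kk) * ψ (q j) := by
        rw [← hpf j, hq j, map_mul]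
      rw [hc, div_mul_eq_mul_div, eq_div_iff hψb]
      linear_combination h1
    set g : E := ∑ jj : Fin pb.dim, ψ (q jj) • pb.gen ^ (jj:ℕ) with hgdef
    have hfg : f = algebraMap (RatFunc F) E c * g := by
      have h1 : f = ∑ jj : Fin pb.dim, a jj • pb.basis jj := (pb.basis.sum_repr f).symm
      rw [h1, hgdef, Finset.mul_sum]
      refine Finset.sum_congr rfl fun jj _ => ?_
      rw [hacq jj, pb.basis_eq_pow, mul_smul, Algebra.smul_def]
    have hnormf : Algebra.norm (RatFunc F) f = c ^ p * Algebra.norm (RatFunc F) g := by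
      rw [hfg, map_mul, Algebra.norm_algebraMap, hfinrank]
    set cc : Fin p → (RatFunc F) := fun j => ψ (q (Fin.cast hdim.symm j)) with hcc
    have hgsum : g = ∑ j : Fin p, cc j • pb.gen ^ (j:ℕ) := by
      rw [hgdef]
      refine Fintype.sum_equiv (finCongr hdim) _ _ fun jj => ?_
      have e1 : Fin.cast hdim.symm (finCongr hdim jj) = jj := by
        apply Fin.ext; rfl
      show ψ (q jj) • pb.gen ^ (jj:ℕ)
          = cc (finCongr hdim jj) • pb.gen ^ ((finCongr hdim jj : Fin p):ℕ)
      rw [hcc]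
      simp only [e1]
      rfl
    have hnormg : Algebra.norm (RatFunc F) g = (∑ j : Fin p, cc j • (compMat (RatFunc F) α' p)^(j:ℕ)).det := by
      rw [hgsum]; exact norm_eq_det_compMat_sum pb hp2 hdim hgenrel cc
    set M : Matrix (Fin p) (Fin p) F[X] :=
      ∑ j : Fin p, q (Fin.cast hdim.symm j) • (compMat F[X] (C α) p)^(j:ℕ) with hM
    have hψCα : ψ (C α) = α' := by
      rw [hψ, hα']
      simp [RatFunc.algebraMap_C]
    have hmapM : (RingHom.mapMatrix ψ : Matrix (Fin p) (Fin p) F[X] →+* Matrix (Fin p) (Fin p) (RatFunc F)) M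
        = ∑ j : Fin p, cc j • (compMat (RatFunc F) α' p)^(j:ℕ) := by
      rw [hM, map_sum]
      refine Finset.sum_congr rfl fun j _ => ?_
      calc (RingHom.mapMatrix ψ) (q (Fin.cast hdim.symm j) • (compMat F[X] (C α) p)^(j:ℕ))
          = (q (Fin.cast hdim.symm j) • (compMat F[X] (C α) p)^(j:ℕ)).map ψ := rfl
        _ = ψ (q (Fin.cast hdim.symm j)) • ((compMat F[X] (C α) p)^(j:ℕ)).map ψ :=
            map_smul_matrix ψ _ _
        _ = ψ (q (Fin.cast hdim.symm j)) •
              ((RingHom.mapMatrix ψ) (compMat F[X] (C α) p))^(j:ℕ) := by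
            rw [← map_pow]; rfl
        _ = cc j • (compMat (RatFunc F) α' p)^(j:ℕ) := by
            rw [RingHom.mapMatrix_apply, compMat_map, hψCα]
    have hdet1 : Algebra.norm (RatFunc F) g = ψ M.det := by
      rw [hnormg, ← hmapM, ← RingHom.map_det]
    set c₀ : Fin p → F := fun j => (q (Fin.cast hdim.symm j)).eval 0 with hc₀
    have hc₀ne : c₀ ≠ 0 := by
      intro h0
      apply hq₀
      have h1 := congrFun h0 (Fin.cast hdim j₀)
      have e1 : Fin.cast hdim.symm (Fin.cast hdim j₀) = j₀ := by apply Fin.ext; rfl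
      rw [hc₀] at h1
      simp only [e1] at h1
      rw [coeff_zero_eq_eval_zero]
      exact h1
    have hdetM : M.det.coeff 0 ≠ 0 := by
      have hε : (evalRingHom (0:F)) M.det
          = (∑ j : Fin p, c₀ j • (compMat F α p)^(j:ℕ)).det := by
        rw [RingHom.map_det]
        congr 1
        rw [hM, map_sum]
        refine Finset.sum_congr rfl fun j _ => ?_
        calc (RingHom.mapMatrix (evalRingHom (0:F)))
              (q (Fin.cast hdim.symm j) • (compMat F[X] (C α) p)^(j:ℕ))
            = (q (Fin.cast hdim.symm j) • (compMat F[X] (C α) p)^(j:ℕ)).map (evalRingHom (0:F)) :=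
              rfl
          _ = (evalRingHom (0:F)) (q (Fin.cast hdim.symm j)) •
                ((compMat F[X] (C α) p)^(j:ℕ)).map (evalRingHom (0:F)) :=
              map_smul_matrix _ _ _
          _ = (evalRingHom (0:F)) (q (Fin.cast hdim.symm j)) •
                ((RingHom.mapMatrix (evalRingHom (0:F))) (compMat F[X] (C α) p))^(j:ℕ) := by
              rw [← map_pow]; rfl
          _ = c₀ j • (compMat F α p)^(j:ℕ) := by
              rw [RingHom.mapMatrix_apply, compMat_map]
              congr 2
              simp
      have hkd := keyDet hirr c₀ hc₀ne
      rw [coeff_zero_eq_eval_zero]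
      rw [show M.det.eval 0 = (evalRingHom (0:F)) M.det from rfl, hε]
      exact hkd
    have hvg : v (Algebra.norm (RatFunc F) g) = ((0:ℤ) : WithTop ℤ) := by
      rw [hdet1]; exact v_unit_poly v hvX hvF _ hdetM
    have hvcne : v c ≠ ⊤ := v.ne_top_iff.mpr hcne
    obtain ⟨m, hm⟩ := WithTop.ne_top_iff_exists.mp hvcne
    refine ⟨m, ?_⟩
    rw [hnormf, v.map_mul, v.map_pow, hvg, ← hm]
    have e0 : ((0:ℤ) : WithTop ℤ) = 0 := rfl
    rw [e0, add_zero]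
    rw [← WithTop.coe_nsmul, nsmul_eq_mul]
  refine ⟨part1, ?_⟩
  rintro ⟨f, hnf⟩
  have hXne : (RatFunc.X : (RatFunc F)) ≠ 0 := RatFunc.X_ne_zero
  have hfne : f ≠ 0 := by
    rintro rfl
    rw [Algebra.norm_zero] at hnf
    exact hXne hnf.symm
  obtain ⟨n, hn⟩ := part1 f hfne
  rw [hnf, hvX] at hn
  have h1 : (1 : ℤ) = p * n := by exact_mod_cast hn
  have h2 : (p : ℤ) ∣ 1 := ⟨n, h1⟩
  have h3 : (p : ℤ) ≤ 1 := Int.le_of_dvd one_pos h2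
  have : p ≤ 1 := by exact_mod_cast h3
  omega
end
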